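/- arXiv:2007.00612 — 2 statements merged into one kernel-verified Lean document; each statement's English description precedes it below -/
import Mathlib

section
/- Let K be a compact convex subset of the Euclidean plane ℝ² with nonempty interior, let a ≤ b, and let φ : [a,b] → ℝ² be a continuous map of finite length such that K is contained in the convex hull K̃ of φ([a,b]), and such that φ has minimal length: for every c ≤ d and every continuous map ψ : [c,d] → ℝ² with K contained in the convex hull of ψ([c,d]), the length of φ on [a,b] is at most the length of ψ on [c,d]. Let α, β ∈ [a,b] be such that φ(α) and φ(β) are extreme points of K̃ with φ(α) ≠ φ(β). Then either the closed segment [φ(α), φ(β)] is contained in the boundary of K̃, or for every nonzero continuous linear functional f : ℝ² → ℝ and c ∈ ℝ with f(φ(α)) = f(φ(β)) = c, there exist points x₁, x₂ ∈ K with x₁ ∈ K̃ ∩ {x : f(x) ≤ c}, x₂ ∈ K̃ ∩ {x : f(x) ≥ c}, and x₁, x₂ ∉ [φ(α), φ(β)]. -/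
open Set
open scoped RealInnerProductSpace

local notation "E2" => EuclideanSpace ℝ (Fin 2)

noncomputable def clampMap (v : E2) (c : ℝ) : E2 → E2 :=
  fun x => x + ((max (c - ⟪v, x⟫) 0) / ‖v‖ ^ 2) • v

lemma max_neg_eq_neg_min (a : ℝ) : max (-a) 0 = -(min a 0) := by
  rcases le_total a 0 with h | h
  · rw [max_eq_left (by linarith), min_eq_left h]
  · rw [max_eq_right (by linarith), min_eq_right h]; ring

lemma clamp_fix {v : E2} {c : ℝ} {x : E2} (h : c ≤ ⟪v, x⟫) : clampMap v c x = x := by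
  have h0 : max (c - ⟪v, x⟫) 0 = 0 := max_eq_right (by linarith)
  rw [clampMap, h0]
  simp

lemma clamp_continuous (v : E2) (c : ℝ) : Continuous (clampMap v c) := by
  refine continuous_id.add (Continuous.smul (f := fun x => max (c - ⟪v, x⟫) 0 / ‖v‖ ^ 2) (g := fun _ => v) ?_ continuous_const)
  exact ((continuous_const.sub (continuous_const.inner continuous_id)).max
    continuous_const).div_const _

lemma sign_aux (a b : ℝ) : 0 ≤ (max a 0 - max b 0) * (min a 0 - min b 0) := by
  rcases le_total a 0 with h | h <;> rcases le_total b 0 with h' | h'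
  · rw [max_eq_right h, max_eq_right h']; ring_nf; positivity
  · rw [max_eq_right h, max_eq_left h', min_eq_left h, min_eq_right h']; nlinarith
  · rw [max_eq_left h, max_eq_right h', min_eq_right h, min_eq_left h']; nlinarith
  · rw [min_eq_right h, min_eq_right h']; ring_nf; positivity

lemma clamp_key {v : E2} (hv : v ≠ 0) (c : ℝ) (x y : E2) :
    ‖clampMap v c x - clampMap v c y‖ ^ 2 +
      ((min (⟪v, x⟫ - c) 0 - min (⟪v, y⟫ - c) 0) / ‖v‖) ^ 2 ≤ ‖x - y‖ ^ 2 := by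
  have hn : (0:ℝ) < ‖v‖ := norm_pos_iff.mpr hv
  set aa : ℝ := ⟪v, x⟫ - c with ha
  set bb : ℝ := ⟪v, y⟫ - c with hb
  set dm : ℝ := min aa 0 - min bb 0 with hdm
  have hPQ : clampMap v c x - clampMap v c y = (x - y) + ((-dm) / ‖v‖ ^ 2) • v := by
    simp only [clampMap]
    have h1 : max (c - ⟪v, x⟫) 0 = -(min aa 0) := by
      rw [show c - ⟪v, x⟫ = -aa by rw [ha]; ring, max_neg_eq_neg_min]
    have h2 : max (c - ⟪v, y⟫) 0 = -(min bb 0) := by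
      rw [show c - ⟪v, y⟫ = -bb by rw [hb]; ring, max_neg_eq_neg_min]
    rw [h1, h2, hdm]
    module
  rw [hPQ, norm_add_sq_real]
  have hinn : ⟪x - y, ((-dm) / ‖v‖ ^ 2) • v⟫ = ((-dm) / ‖v‖ ^ 2) * (aa - bb) := by
    rw [real_inner_smul_right, real_inner_comm, inner_sub_right]
    rw [show aa - bb = ⟪v, x⟫ - ⟪v, y⟫ by rw [ha, hb]; ring]
  rw [hinn, norm_smul]
  have hsplit : aa - bb = (max aa 0 - max bb 0) + dm := by
    have h1 := max_add_min aa 0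
    have h2 := max_add_min bb 0
    rw [hdm]; linarith
  have hsign := sign_aux aa bb
  have habs : (‖(-dm) / ‖v‖ ^ 2‖ * ‖v‖) ^ 2 = dm ^ 2 / ‖v‖ ^ 2 := by
    rw [Real.norm_eq_abs, mul_pow, sq_abs]
    field_simp
  rw [habs]
  have hexp : 2 * (-dm / ‖v‖ ^ 2 * (aa - bb)) = (-2 * dm * (aa - bb)) / ‖v‖ ^ 2 := by
    ring
  rw [hexp]
  rw [← hdm] at hsign
  have key : (-2 * dm * (aa - bb)) / ‖v‖ ^ 2 + dm ^ 2 / ‖v‖ ^ 2 + dm ^ 2 / ‖v‖ ^ 2 ≤ 0 := by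
    rw [← add_div, ← add_div, div_nonpos_iff]
    right
    constructor
    · rw [show -2 * dm * (aa - bb) + dm ^ 2 + dm ^ 2
          = -2*((aa ⊔ 0 - bb ⊔ 0) * dm) by rw [hsplit]; ring]
      linarith [hsign]
    · positivity
  rw [div_pow]
  linarith [key]


lemma clamp_dist_le {v : E2} (hv : v ≠ 0) (c : ℝ) (x y : E2) :
    dist (clampMap v c x) (clampMap v c y) ≤ dist x y := by
  have h := clamp_key hv c x y
  have h2 : ‖clampMap v c x - clampMap v c y‖ ^ 2 ≤ ‖x - y‖ ^ 2 := by
    nlinarith [sq_nonneg ((min (⟪v, x⟫ - c) 0 - min (⟪v, y⟫ - c) 0) / ‖v‖)]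
  rw [dist_eq_norm, dist_eq_norm]
  have h3 := Real.sqrt_le_sqrt h2
  rwa [Real.sqrt_sq (norm_nonneg _), Real.sqrt_sq (norm_nonneg _)] at h3

lemma clamp_lipschitz {v : E2} (hv : v ≠ 0) (c : ℝ) : LipschitzWith 1 (clampMap v c) :=
  LipschitzWith.of_dist_le_mul fun x y => by
    simpa using clamp_dist_le hv c x y

-- helper: extend a sum over `Fin n` (n ≤ 3) to `Fin 3`
lemma sum_extend_fin {M : Type*} [AddCommMonoid M] {n : ℕ} (hn : n ≤ 3) (g : Fin n → M) :
    (∑ j : Fin 3, if h : (j : ℕ) < n then g ⟨j, h⟩ else 0) = ∑ i : Fin n, g i := by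
  rw [Fin.sum_univ_eq_sum_range (fun j => if h : j < n then g ⟨j, h⟩ else 0) 3]
  have hR : ∑ i ∈ Finset.range n, (fun j => if h : j < n then g ⟨j, h⟩ else 0) i
      = ∑ i : Fin n, g i := by
    rw [← Fin.sum_univ_eq_sum_range]
    exact Finset.sum_congr rfl fun i _ => dif_pos i.isLt
  rw [← hR]
  symm
  apply Finset.sum_subset (Finset.range_subset_range.mpr hn)
  intro i _ hi
  rw [Finset.mem_range] at hi
  simp only [dif_neg hi]

lemma isCompact_convexHull_E2 {S : Set E2} (hS : IsCompact S) :
    IsCompact (convexHull ℝ S) := by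
  rcases S.eq_empty_or_nonempty with rfl | ⟨x₀, hx₀⟩
  · simpa [convexHull_empty] using isCompact_empty
  set T : Set ((Fin 3 → ℝ) × (Fin 3 → E2)) :=
    (stdSimplex ℝ (Fin 3)) ×ˢ (Set.univ.pi fun _ : Fin 3 => S) with hT
  have hTcomp : IsCompact T :=
    IsCompact.prod (show IsCompact (stdSimplex ℝ (Fin 3)) by apply isCompact_stdSimplex)
      (isCompact_univ_pi fun _ => hS)
  set g : (Fin 3 → ℝ) × (Fin 3 → E2) → E2 := fun p => ∑ i, p.1 i • p.2 i with hg
  have hgcont : Continuous g := by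
    apply continuous_finset_sum
    intro i _
    exact ((continuous_apply i).comp continuous_fst).smul
      ((continuous_apply i).comp continuous_snd)
  have himg : g '' T = convexHull ℝ S := by
    apply Subset.antisymm
    · rintro - ⟨⟨w, z⟩, ⟨hw, hz⟩, rfl⟩
      rw [Set.mem_pi] at hz
      exact mem_convexHull_of_exists_fintype w z hw.1 hw.2 (fun i => hz i (mem_univ i)) rfl
    · intro y hy
      rw [convexHull_eq_union] at hy
      simp only [Set.mem_iUnion] at hy
      obtain ⟨t, hts, hai, hyt⟩ := hy
      have htne : t.Nonempty := by
        rcases t.eq_empty_or_nonempty with rfl | h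
        · simp [convexHull_empty] at hyt
        · exact h
      have hcard : t.card ≤ 3 := by
        haveI : Nonempty ↥t := htne.to_subtype
        have h1 := hai.finrank_vectorSpan_add_one
        rw [Fintype.card_coe] at h1
        have h2 : Module.finrank ℝ (vectorSpan ℝ (Set.range ((↑) : ↥t → E2))) ≤ 2 := by
          have := Submodule.finrank_le (vectorSpan ℝ (Set.range ((↑) : ↥t → E2)))
          simpa [finrank_euclideanSpace] using this
        omega
      rw [Finset.convexHull_eq] at hyt
      obtain ⟨w, hw0, hw1, hwy⟩ := hyt
      rw [Finset.centerMass_eq_of_sum_1 _ _ hw1] at hwy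
      set e : Fin t.card ≃ ↥t := t.equivFin.symm with he
      set zf : Fin 3 → E2 := fun j => if h : (j : ℕ) < t.card then ((e ⟨j, h⟩ : ↥t) : E2) else x₀
        with hzf
      set wf : Fin 3 → ℝ := fun j => if h : (j : ℕ) < t.card then w ((e ⟨j, h⟩ : ↥t) : E2) else 0
        with hwf
      have hsum1 : ∑ j : Fin 3, wf j = 1 := by
        rw [hwf]
        rw [sum_extend_fin hcard (fun i => w ((e i : ↥t) : E2))]
        rw [Equiv.sum_comp e (fun y : ↥t => w (y : E2))]
        rw [Finset.sum_coe_sort t (fun y => w y)]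
        exact hw1
      have hsumy : ∑ j : Fin 3, wf j • zf j = y := by
        have : ∀ j : Fin 3, wf j • zf j
            = (if h : (j : ℕ) < t.card then w ((e ⟨j, h⟩ : ↥t) : E2) • ((e ⟨j, h⟩ : ↥t) : E2)
               else 0) := by
          intro j
          by_cases h : (j : ℕ) < t.card
          · simp [hwf, hzf, h]
          · simp [hwf, hzf, h]
        rw [Finset.sum_congr rfl (fun j _ => this j)]
        rw [sum_extend_fin hcard (fun i => w ((e i : ↥t) : E2) • ((e i : ↥t) : E2))]
        rw [Equiv.sum_comp e (fun y : ↥t => w (y : E2) • (y : E2))]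
        rw [Finset.sum_coe_sort t (fun y => w y • y)]
        convert hwy using 2 <;> rfl
      have hwf0 : ∀ j, 0 ≤ wf j := by
        intro j
        by_cases h : (j : ℕ) < t.card
        · simp only [hwf, dif_pos h]; exact hw0 _ (e ⟨j, h⟩).2
        · simp [hwf, h]
      have hzfS : ∀ j, zf j ∈ S := by
        intro j
        by_cases h : (j : ℕ) < t.card
        · simp only [hzf, dif_pos h]; exact hts (e ⟨j, h⟩).2
        · simp only [hzf, dif_neg h]; exact hx₀
      exact ⟨(wf, zf), ⟨⟨hwf0, hsum1⟩, Set.mem_pi.mpr fun j _ => hzfS j⟩, hsumy⟩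
  rw [← himg]
  exact hTcomp.image hgcont


-- every vector in ker f is a multiple of a given nonzero vector of ker f
lemma ker_collinear (f : E2 →L[ℝ] ℝ) (hf : f ≠ 0) {d : E2} (hd : f d = 0) (hd0 : d ≠ 0)
    {z : E2} (hz : f z = 0) : ∃ τ : ℝ, z = τ • d := by
  have hfl : (f : E2 →ₗ[ℝ] ℝ) ≠ 0 := by
    intro h
    apply hf
    ext x
    have := LinearMap.congr_fun h x
    simpa using this
  have hsurj : Function.Surjective (f : E2 →ₗ[ℝ] ℝ) := by
    obtain ⟨x₁, hx₁⟩ : ∃ x₁, f x₁ ≠ 0 := by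
      by_contra h
      push_neg at h
      exact hf (ContinuousLinearMap.ext fun x => by simp [h x])
    intro y
    exact ⟨(y / f x₁) • x₁, by simp [map_smul]; field_simp⟩
  have hrange : LinearMap.range (f : E2 →ₗ[ℝ] ℝ) = ⊤ := LinearMap.range_eq_top.mpr hsurj
  have hrank : Module.finrank ℝ (LinearMap.ker (f : E2 →ₗ[ℝ] ℝ)) = 1 := by
    have h1 := LinearMap.finrank_range_add_finrank_ker (f : E2 →ₗ[ℝ] ℝ)
    rw [hrange] at h1
    rw [finrank_top] at h1
    simp [finrank_euclideanSpace] at h1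
    omega
  have hdker : d ∈ LinearMap.ker (f : E2 →ₗ[ℝ] ℝ) := by simpa using hd
  have hzker : z ∈ LinearMap.ker (f : E2 →ₗ[ℝ] ℝ) := by simpa using hz
  have hd0' : (⟨d, hdker⟩ : LinearMap.ker (f : E2 →ₗ[ℝ] ℝ)) ≠ 0 := by
    simp [Submodule.mk_eq_zero, hd0]
  obtain ⟨τ, hτ⟩ := (finrank_eq_one_iff_of_nonzero' ⟨d, hdker⟩ hd0').mp hrank ⟨z, hzker⟩
  exact ⟨τ, by simpa [Subtype.ext_iff] using hτ.symm⟩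

-- the slice of the hull at level c is the segment [B, D]
lemma slice_subset_segment {S : Set E2} (f : E2 →L[ℝ] ℝ) (hf : f ≠ 0) (c : ℝ) {B D : E2}
    (hB : B ∈ Set.extremePoints ℝ (convexHull ℝ S))
    (hD : D ∈ Set.extremePoints ℝ (convexHull ℝ S))
    (hBD : B ≠ D) (hfB : f B = c) (hfD : f D = c)
    {z : E2} (hz : z ∈ convexHull ℝ S) (hfz : f z = c) : z ∈ segment ℝ B D := by
  have hd0 : D - B ≠ 0 := sub_ne_zero.mpr (Ne.symm hBD)
  have hdker : f (D - B) = 0 := by rw [map_sub, hfB, hfD, sub_self]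
  have hzker : f (z - B) = 0 := by rw [map_sub, hfB, hfz, sub_self]
  obtain ⟨τ, hτ⟩ := ker_collinear f hf hdker hd0 hzker
  have hzeq : z = B + τ • (D - B) := by rw [← hτ]; abel
  rcases le_or_gt 0 τ with hτ0 | hτneg
  · rcases le_or_gt τ 1 with hτ1 | hτgt
    · exact ⟨1 - τ, τ, by linarith, hτ0, by ring, by rw [hzeq]; module⟩
    · exfalso
      have hτ0' : τ ≠ 0 := by linarith
      have hmem : D ∈ openSegment ℝ B z := by
        refine ⟨1 - 1/τ, 1/τ, ?_, ?_, by field_simp; ring, ?_⟩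
        · have : 1/τ < 1 := by rw [div_lt_one (by linarith)]; linarith
          linarith
        · positivity
        · rw [hzeq]
          match_scalars <;> field_simp <;> ring
      obtain ⟨h1, h2⟩ := (mem_extremePoints.mp hD).2 _ hB.1 _ hz hmem
      exact hBD h1
  · exfalso
    have h1τ : (0:ℝ) < 1 - τ := by linarith
    have h1τ' : (1:ℝ) - τ ≠ 0 := ne_of_gt h1τ
    have hmem : B ∈ openSegment ℝ z D := by
      refine ⟨1/(1-τ), -τ/(1-τ), ?_, ?_, ?_, ?_⟩
      · exact div_pos one_pos h1τ
      · exact div_pos (by linarith) h1τ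
      · field_simp
        ring
      · rw [hzeq]
        match_scalars <;> field_simp <;> ring
    obtain ⟨h1, h2⟩ := (mem_extremePoints.mp hB).2 _ hz _ hD.1 hmem
    exact hBD h2.symm

-- extreme points of (hull S) ∩ {c ≤ f} lie in S ∩ {c ≤ f}
lemma extremePoints_slab_subset {S : Set E2} (f : E2 →L[ℝ] ℝ) (hf : f ≠ 0) (c : ℝ) {B D : E2}
    (hB : B ∈ Set.extremePoints ℝ (convexHull ℝ S))
    (hD : D ∈ Set.extremePoints ℝ (convexHull ℝ S))
    (hBD : B ≠ D) (hfB : f B = c) (hfD : f D = c) :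
    Set.extremePoints ℝ ((convexHull ℝ S) ∩ {x | c ≤ f x}) ⊆ S ∩ {x | c ≤ f x} := by
  intro z hz
  obtain ⟨⟨hzhull, hzc⟩, hzext⟩ := hz
  rcases eq_or_lt_of_le (show c ≤ f z from hzc) with heq | hlt
  · -- on the line: z ∈ segment B D, and z extreme forces z = B or z = D
    have hzseg : z ∈ segment ℝ B D :=
      slice_subset_segment f hf c hB hD hBD hfB hfD hzhull heq.symm
    have hBA : B ∈ (convexHull ℝ S) ∩ {x | c ≤ f x} := ⟨hB.1, le_of_eq hfB.symm⟩
    have hDA : D ∈ (convexHull ℝ S) ∩ {x | c ≤ f x} := ⟨hD.1, le_of_eq hfD.symm⟩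
    by_cases hzB : z = B
    · exact ⟨hzB ▸ extremePoints_convexHull_subset hB, hzc⟩
    by_cases hzD : z = D
    · exact ⟨hzD ▸ extremePoints_convexHull_subset hD, hzc⟩
    · exfalso
      have : z ∈ openSegment ℝ B D :=
        mem_openSegment_of_ne_left_right (Ne.symm hzB) (Ne.symm hzD) hzseg
      have h1 := hzext hBA hDA this
      exact hzB h1.symm
  · -- strictly inside the halfplane: z is extreme in hull S
    have haux : ∀ x y : E2, x ∈ convexHull ℝ S → y ∈ convexHull ℝ S →
        z ∈ openSegment ℝ x y → c ≤ f x := by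
      intro x y hx hy hseg
      by_contra hfx
      push_neg at hfx
      obtain ⟨p, q, hp, hq, hpq, hcombo⟩ := hseg
      have hfz' : f z = p * f x + q * f y := by
        rw [← hcombo]; simp [map_add, map_smul]
      have hfy : c < f y := by
        by_contra hcy
        push_neg at hcy
        have hc : p * c + q * c = c := by linear_combination c * hpq
        nlinarith [mul_lt_mul_of_pos_left hfx hp, mul_le_mul_of_nonneg_left hcy hq.le]
      set s : ℝ := (c - f x) / (f z - f x) with hs
      have hzx : f x < f z := by linarith
      have hs0 : 0 < s := div_pos (by linarith) (by linarith)
      have hs1 : s < 1 := by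
        rw [div_lt_one (by linarith)]; linarith
      set x' : E2 := x + s • (z - x) with hx'
      have hne : f z - f x ≠ 0 := ne_of_gt (by linarith)
      have hfx' : f x' = c := by
        rw [hx']
        simp only [map_add, map_smul, map_sub, smul_eq_mul]
        have hcan : (f z - f x) * ((c - f x) / (f z - f x)) = c - f x := by
          field_simp
        rw [hs]
        rw [show s * (f z - f x) = (f z - f x) * ((c - f x) / (f z - f x)) by rw [hs]; ring]
        rw [hcan]; ring
      have hx'hull : x' ∈ convexHull ℝ S := by
        have : x' = (1 - s) • x + s • z := by rw [hx']; module
        rw [this]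
        exact (convex_convexHull ℝ S) hx hzhull (by linarith) (le_of_lt hs0) (by ring)
      set T : ℝ := 1 - s * q with hT
      have hT0 : 0 < T := by nlinarith
      have hT1 : T ≠ 0 := ne_of_gt hT0
      have hkey : T • z = p • x' + (q * (1 - s)) • y := by
        have h2 : (1 - s) • (p • x + q • y) + (s * p) • z
            = p • x' + (q * (1 - s)) • y := by
          rw [hx']; module
        rw [hcombo] at h2
        rw [← h2]
        have hTps : T = (1 - s) + s * p := by
          rw [hT]; linear_combination (-s) * hpq
        rw [hTps, add_smul]
      have hzmem : z ∈ openSegment ℝ x' y := by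
        refine ⟨p / T, q * (1 - s) / T, div_pos hp hT0,
          div_pos (by nlinarith) hT0, ?_, ?_⟩
        · rw [← add_div, div_eq_one_iff_eq hT1, hT]
          linear_combination hpq
        · apply smul_right_injective _ hT1
          show T • ((p / T) • x' + (q * (1 - s) / T) • y) = T • z
          rw [hkey]
          match_scalars <;> field_simp
      have h1 := hzext ⟨hx'hull, le_of_eq hfx'.symm⟩ ⟨hy, le_of_lt hfy⟩ hzmem
      rw [h1] at hfx'
      exact absurd hfx' (ne_of_gt hlt)
    have hzexthull : z ∈ Set.extremePoints ℝ (convexHull ℝ S) := by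
      refine ⟨hzhull, fun x hx y hy hseg => ?_⟩
      have hcx : c ≤ f x := haux x y hx hy hseg
      have hcy : c ≤ f y := haux y x hy hx (by rwa [openSegment_symm])
      exact hzext ⟨hx, hcx⟩ ⟨hy, hcy⟩ hseg
    exact ⟨extremePoints_convexHull_subset hzexthull, hzc⟩

-- Lemma A
lemma hull_inter_halfplane_subset {S : Set E2} (hS : IsCompact S) (f : E2 →L[ℝ] ℝ) (hf : f ≠ 0)
    (c : ℝ) {B D : E2}
    (hB : B ∈ Set.extremePoints ℝ (convexHull ℝ S))
    (hD : D ∈ Set.extremePoints ℝ (convexHull ℝ S))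
    (hBD : B ≠ D) (hfB : f B = c) (hfD : f D = c) :
    (convexHull ℝ S) ∩ {x | c ≤ f x} ⊆ convexHull ℝ (S ∩ {x | c ≤ f x}) := by
  have hHcl : IsClosed {x : E2 | c ≤ f x} := isClosed_le continuous_const f.continuous
  have hAcomp : IsCompact ((convexHull ℝ S) ∩ {x | c ≤ f x}) :=
    (isCompact_convexHull_E2 hS).inter_right hHcl
  have hAconv : Convex ℝ ((convexHull ℝ S) ∩ {x | c ≤ f x}) := by
    refine (convex_convexHull ℝ S).inter ?_
    have : {x : E2 | c ≤ f x} = (f : E2 →ₗ[ℝ] ℝ) ⁻¹' (Ici c) := rfl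
    rw [this]
    exact (convex_Ici c).linear_preimage _
  have hKM := closure_convexHull_extremePoints hAcomp hAconv
  have hsub := extremePoints_slab_subset f hf c hB hD hBD hfB hfD
  have hclosed : IsClosed (convexHull ℝ (S ∩ {x | c ≤ f x})) :=
    (isCompact_convexHull_E2 (hS.inter_right hHcl)).isClosed
  calc (convexHull ℝ S) ∩ {x | c ≤ f x}
      = closure (convexHull ℝ (Set.extremePoints ℝ ((convexHull ℝ S) ∩ {x | c ≤ f x}))) :=
        hKM.symm
    _ ⊆ closure (convexHull ℝ (S ∩ {x | c ≤ f x})) :=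
        closure_mono (convexHull_mono hsub)
    _ = convexHull ℝ (S ∩ {x | c ≤ f x}) := hclosed.closure_eq


lemma evar_clamp_lt {v : E2} (hv : v ≠ 0) (c : ℝ) (φ : ℝ → E2) {a b α t₀ : ℝ}
    (hα : α ∈ Set.Icc a b) (ht₀ : t₀ ∈ Set.Icc a b)
    (hfα : ⟪v, φ α⟫ = c) (hft₀ : ⟪v, φ t₀⟫ < c)
    (hfin : eVariationOn φ (Set.Icc a b) ≠ ⊤) :
    eVariationOn (clampMap v c ∘ φ) (Set.Icc a b) < eVariationOn φ (Set.Icc a b) := by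
  classical
  set ψ : ℝ → E2 := clampMap v c ∘ φ with hψ
  have hnv : (0:ℝ) < ‖v‖ := norm_pos_iff.mpr hv
  set m : ℝ → ℝ := fun t => min (⟪v, φ t⟫ - c) 0 / ‖v‖ with hm
  have hpt : ∀ s t : ℝ, dist (ψ s) (ψ t) ^ 2 + (m s - m t) ^ 2 ≤ dist (φ s) (φ t) ^ 2 := by
    intro s t
    have h := clamp_key hv c (φ s) (φ t)
    rw [dist_eq_norm, dist_eq_norm]
    have hrw : (m s - m t) ^ 2
        = ((min (⟪v, φ s⟫ - c) 0 - min (⟪v, φ t⟫ - c) 0) / ‖v‖) ^ 2 := by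
      simp only [hm]; ring
    rw [hrw]
    exact h
  have hptd : ∀ s t : ℝ, dist (ψ s) (ψ t) ≤ dist (φ s) (φ t) := fun s t =>
    clamp_dist_le hv c (φ s) (φ t)
  set u : ℝ := min α t₀ with hu
  set w : ℝ := max α t₀ with hw
  have huw : u ≤ w := min_le_max
  have hau : a ≤ u := le_min hα.1 ht₀.1
  have hwb : w ≤ b := max_le hα.2 ht₀.2
  obtain ⟨ε, hε0, hmuw⟩ : ∃ ε : ℝ, 0 < ε ∧ |m w - m u| = ε := by
    refine ⟨(c - ⟪v, φ t₀⟫) / ‖v‖, div_pos (by linarith) hnv, ?_⟩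
    have hmα : m α = 0 := by
      simp only [hm, hfα, sub_self]
      simp
    have hmt₀ : m t₀ = -((c - ⟪v, φ t₀⟫) / ‖v‖) := by
      simp only [hm]
      rw [min_eq_left (by linarith)]
      ring
    have hq : 0 < (c - ⟪v, φ t₀⟫) / ‖v‖ := div_pos (by linarith) hnv
    rcases le_total α t₀ with h | h
    · rw [hu, hw, min_eq_left h, max_eq_right h, hmt₀, hmα]
      rw [abs_of_nonpos (by linarith)]
      ring
    · rw [hu, hw, min_eq_right h, max_eq_left h, hmα, hmt₀]
      rw [abs_of_nonneg (by linarith)]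
      ring
  obtain ⟨L, hL0, hLbound⟩ : ∃ L : ℝ, 0 ≤ L ∧ ∀ (N : ℕ) (g : ℕ → ℝ), Monotone g →
      (∀ i, g i ∈ Set.Icc a b) →
      (∑ i ∈ Finset.range N, dist (φ (g (i + 1))) (φ (g i))) ≤ L := by
    refine ⟨(eVariationOn φ (Set.Icc a b)).toReal, ENNReal.toReal_nonneg, ?_⟩
    intro N g hmono hmem
    rw [← ENNReal.ofReal_le_iff_le_toReal hfin]
    have h2 : ENNReal.ofReal (∑ i ∈ Finset.range N, dist (φ (g (i + 1))) (φ (g i)))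
        = ∑ i ∈ Finset.range N, edist (φ (g (i + 1))) (φ (g i)) := by
      rw [ENNReal.ofReal_sum_of_nonneg (fun i _ => dist_nonneg)]
      exact Finset.sum_congr rfl fun i _ => (edist_dist _ _).symm
    rw [h2]
    exact eVariationOn.sum_le (f := φ) (n := N) hmono hmem
  obtain ⟨δ, hδ0, hquad⟩ : ∃ δ : ℝ, 0 < δ ∧ ∀ A : ℝ, 0 ≤ A → A ≤ L →
      A + δ ≤ Real.sqrt (A ^ 2 + ε ^ 2) := by
    refine ⟨ε ^ 2 / (2 * (L + ε)), by positivity, ?_⟩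
    intro A hA0 hAL
    set δ' : ℝ := ε ^ 2 / (2 * (L + ε)) with hδ'
    have hδε : δ' ≤ ε := by
      rw [hδ', div_le_iff₀ (by positivity)]
      nlinarith
    have hδ'0 : 0 < δ' := by positivity
    rw [show A + δ' = Real.sqrt ((A + δ') ^ 2) from (Real.sqrt_sq (by positivity)).symm]
    apply Real.sqrt_le_sqrt
    have hδid : δ' * (2 * (L + ε)) = ε ^ 2 := by
      rw [hδ']
      field_simp
    nlinarith
  -- middle-interval strict estimate
  have key : eVariationOn ψ (Set.Icc u w) + ENNReal.ofReal δ
      ≤ eVariationOn φ (Set.Icc u w) := by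
    have hne : (Set.Icc u w).Nonempty := nonempty_Icc.mpr huw
    haveI := eVariationOn.nonempty_monotone_mem hne
    rw [eVariationOn, ENNReal.iSup_add]
    apply iSup_le
    rintro ⟨n, gseq, hgmono, hgmem⟩
    set g : ℕ → ℝ := fun i => if i = 0 then u else if i ≤ n + 1 then gseq (i - 1) else w
      with hg
    have hg0 : g 0 = u := by simp [hg]
    have hgtop : g (n + 2) = w := by
      simp only [hg]; rw [if_neg (by omega), if_neg (by omega)]
    have hgmid : ∀ i, i ≤ n → g (i + 1) = gseq i := by
      intro i hi
      simp only [hg]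
      rw [if_neg (by omega), if_pos (by omega)]
      norm_num
    have hgmem' : ∀ i, g i ∈ Set.Icc u w := by
      intro i
      by_cases h0 : i = 0
      · subst h0; rw [hg0]; exact ⟨le_refl u, huw⟩
      by_cases h1 : i ≤ n + 1
      · have : g i = gseq (i - 1) := by simp only [hg]; rw [if_neg h0, if_pos h1]
        rw [this]; exact hgmem _
      · have : g i = w := by simp only [hg]; rw [if_neg h0, if_neg h1]
        rw [this]; exact ⟨huw, le_refl w⟩
    have hgmono' : Monotone g := by
      apply monotone_nat_of_le_succ
      intro i
      rcases Nat.eq_zero_or_pos i with rfl | hi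
      · rw [hg0]; exact (hgmem' 1).1
      by_cases h2 : i + 1 ≤ n + 1
      · have e1 : g i = gseq (i - 1) := by simp only [hg]; rw [if_neg (by omega), if_pos (by omega)]
        have e2 : g (i + 1) = gseq i := hgmid i (by omega)
        rw [e1, e2]
        exact hgmono (by omega)
      by_cases h3 : i ≤ n + 1
      · have e2 : g (i + 1) = w := by simp only [hg]; rw [if_neg (by omega), if_neg (by omega)]
        rw [e2]; exact (hgmem' i).2
      · have e1 : g i = w := by simp only [hg]; rw [if_neg (by omega), if_neg (by omega)]
        have e2 : g (i + 1) = w := by simp only [hg]; rw [if_neg (by omega), if_neg (by omega)]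
        rw [e1, e2]
    have hgI : ∀ i, g i ∈ Set.Icc a b := fun i =>
      ⟨le_trans hau (hgmem' i).1, le_trans (hgmem' i).2 hwb⟩
    set N : ℕ := n + 2 with hN
    have hsum_m : ε ≤ ∑ i ∈ Finset.range N, |m (g (i + 1)) - m (g i)| := by
      have htel : ∑ i ∈ Finset.range N, (m (g (i + 1)) - m (g i)) = m (g N) - m (g 0) :=
        Finset.sum_range_sub (fun i => m (g i)) N
      calc ε = |m (g N) - m (g 0)| := by rw [hN, hgtop, hg0, hmuw]
        _ = |∑ i ∈ Finset.range N, (m (g (i + 1)) - m (g i))| := by rw [htel]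
        _ ≤ ∑ i ∈ Finset.range N, |m (g (i + 1)) - m (g i)| :=
            Finset.abs_sum_le_sum_abs _ _
    have hsum_φ_le : (∑ i ∈ Finset.range N, dist (φ (g (i + 1))) (φ (g i))) ≤ L :=
      hLbound N g hgmono' hgI
    have hsum_ψ_le : (∑ i ∈ Finset.range N, dist (ψ (g (i + 1))) (ψ (g i)))
        ≤ ∑ i ∈ Finset.range N, dist (φ (g (i + 1))) (φ (g i)) :=
      Finset.sum_le_sum fun i _ => hptd _ _
    set zc : ℕ → ℂ := fun i => ⟨dist (ψ (g (i + 1))) (ψ (g i)), |m (g (i + 1)) - m (g i)|⟩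
      with hzc
    have habs_le : ∀ i, ‖zc i‖ ≤ dist (φ (g (i + 1))) (φ (g i)) := by
      intro i
      have h := hpt (g (i + 1)) (g i)
      have h2 : ‖zc i‖ = Real.sqrt (dist (ψ (g (i + 1))) (ψ (g i)) ^ 2
          + |m (g (i + 1)) - m (g i)| ^ 2) := by
        rw [Complex.norm_def, Complex.normSq_mk]
        congr 1
        ring
      rw [h2, sq_abs]
      calc Real.sqrt (dist (ψ (g (i + 1))) (ψ (g i)) ^ 2 + (m (g (i + 1)) - m (g i)) ^ 2)
          ≤ Real.sqrt (dist (φ (g (i + 1))) (φ (g i)) ^ 2) := Real.sqrt_le_sqrt h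
        _ = dist (φ (g (i + 1))) (φ (g i)) := Real.sqrt_sq dist_nonneg
    have hminkowski : Real.sqrt ((∑ i ∈ Finset.range N, dist (ψ (g (i + 1))) (ψ (g i))) ^ 2
        + ε ^ 2) ≤ ∑ i ∈ Finset.range N, dist (φ (g (i + 1))) (φ (g i)) := by
      have h1 : ‖∑ i ∈ Finset.range N, zc i‖
          ≤ ∑ i ∈ Finset.range N, ‖zc i‖ := norm_sum_le _ _
      have h2 : (∑ i ∈ Finset.range N, ‖zc i‖)
          ≤ ∑ i ∈ Finset.range N, dist (φ (g (i + 1))) (φ (g i)) :=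
        Finset.sum_le_sum fun i _ => habs_le i
      have h3 : Real.sqrt ((∑ i ∈ Finset.range N, dist (ψ (g (i + 1))) (ψ (g i))) ^ 2 + ε ^ 2)
          ≤ ‖∑ i ∈ Finset.range N, zc i‖ := by
        rw [Complex.norm_def, Complex.normSq_apply, Complex.re_sum, Complex.im_sum]
        apply Real.sqrt_le_sqrt
        have hre : ∀ i, (zc i).re = dist (ψ (g (i + 1))) (ψ (g i)) := fun i => rfl
        have him : ∀ i, (zc i).im = |m (g (i + 1)) - m (g i)| := fun i => rfl
        simp only [hre, him]
        have hdm0 : 0 ≤ ∑ i ∈ Finset.range N, |m (g (i + 1)) - m (g i)| :=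
          Finset.sum_nonneg fun i _ => abs_nonneg _
        nlinarith [hsum_m, hdm0]
      linarith
    have hreal : (∑ i ∈ Finset.range N, dist (ψ (g (i + 1))) (ψ (g i))) + δ
        ≤ ∑ i ∈ Finset.range N, dist (φ (g (i + 1))) (φ (g i)) := by
      have hA0 : 0 ≤ ∑ i ∈ Finset.range N, dist (ψ (g (i + 1))) (ψ (g i)) :=
        Finset.sum_nonneg fun i _ => dist_nonneg
      have h1 := hquad _ hA0 (le_trans hsum_ψ_le hsum_φ_le)
      linarith [hminkowski]
    have horig_le : (∑ i ∈ Finset.range n, edist (ψ (gseq (i + 1))) (ψ (gseq i)))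
        ≤ ∑ i ∈ Finset.range N, edist (ψ (g (i + 1))) (ψ (g i)) := by
      calc (∑ i ∈ Finset.range n, edist (ψ (gseq (i + 1))) (ψ (gseq i)))
          = ∑ i ∈ Finset.range n, edist (ψ (g (i + 1 + 1))) (ψ (g (i + 1))) := by
            apply Finset.sum_congr rfl
            intro i hi
            have hi' := Finset.mem_range.mp hi
            rw [hgmid (i + 1) (by omega), hgmid i (by omega)]
        _ ≤ ∑ i ∈ Finset.range N, edist (ψ (g (i + 1))) (ψ (g i)) := by
            rw [hN, Finset.sum_range_succ' (fun i => edist (ψ (g (i + 1))) (ψ (g i))) (n + 1),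
              Finset.sum_range_succ (fun i => edist (ψ (g (i + 1 + 1))) (ψ (g (i + 1)))) n]
            exact le_add_right (le_add_right (le_refl _))
    have h2 : ∑ i ∈ Finset.range N, edist (ψ (g (i + 1))) (ψ (g i))
        = ENNReal.ofReal (∑ i ∈ Finset.range N, dist (ψ (g (i + 1))) (ψ (g i))) := by
      rw [ENNReal.ofReal_sum_of_nonneg (fun i _ => dist_nonneg)]
      exact Finset.sum_congr rfl fun i _ => edist_dist _ _
    have h3 : ENNReal.ofReal (∑ i ∈ Finset.range N, dist (ψ (g (i + 1))) (ψ (g i)))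
        + ENNReal.ofReal δ
        ≤ ENNReal.ofReal (∑ i ∈ Finset.range N, dist (φ (g (i + 1))) (φ (g i))) := by
      rw [← ENNReal.ofReal_add (Finset.sum_nonneg fun i _ => dist_nonneg) hδ0.le]
      exact ENNReal.ofReal_le_ofReal hreal
    have h4 : ENNReal.ofReal (∑ i ∈ Finset.range N, dist (φ (g (i + 1))) (φ (g i)))
        ≤ eVariationOn φ (Set.Icc u w) := by
      have h5 : ENNReal.ofReal (∑ i ∈ Finset.range N, dist (φ (g (i + 1))) (φ (g i)))
          = ∑ i ∈ Finset.range N, edist (φ (g (i + 1))) (φ (g i)) := by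
        rw [ENNReal.ofReal_sum_of_nonneg (fun i _ => dist_nonneg)]
        exact Finset.sum_congr rfl fun i _ => (edist_dist _ _).symm
      rw [h5]
      exact eVariationOn.sum_le (f := φ) (n := N) hgmono' hgmem'
    calc (∑ i ∈ Finset.range n, edist (ψ (gseq (i + 1))) (ψ (gseq i))) + ENNReal.ofReal δ
        ≤ (∑ i ∈ Finset.range N, edist (ψ (g (i + 1))) (ψ (g i))) + ENNReal.ofReal δ :=
          add_le_add_left horig_le _
      _ = ENNReal.ofReal (∑ i ∈ Finset.range N, dist (ψ (g (i + 1))) (ψ (g i)))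
          + ENNReal.ofReal δ := by rw [h2]
      _ ≤ ENNReal.ofReal (∑ i ∈ Finset.range N, dist (φ (g (i + 1))) (φ (g i))) := h3
      _ ≤ eVariationOn φ (Set.Icc u w) := h4
  -- assembly
  have hlip : ∀ (s : Set ℝ), eVariationOn ψ s ≤ eVariationOn φ s := by
    intro s
    have h := LipschitzOnWith.comp_eVariationOn_le
      ((clamp_lipschitz hv c).lipschitzOnWith (s := Set.univ)) (Set.mapsTo_univ φ s)
    simpa using h
  have hub : u ≤ b := le_trans huw hwb
  have haw : a ≤ w := le_trans hau huw
  have hsplitφ1 : eVariationOn φ (Set.Icc a u) + eVariationOn φ (Set.Icc u b)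
      = eVariationOn φ (Set.Icc a b) := by
    have := eVariationOn.Icc_add_Icc φ (s := Set.univ) hau hub (Set.mem_univ u)
    simpa using this
  have hsplitφ2 : eVariationOn φ (Set.Icc u w) + eVariationOn φ (Set.Icc w b)
      = eVariationOn φ (Set.Icc u b) := by
    have := eVariationOn.Icc_add_Icc φ (s := Set.univ) huw hwb (Set.mem_univ w)
    simpa using this
  have hsplitψ1 : eVariationOn ψ (Set.Icc a u) + eVariationOn ψ (Set.Icc u b)
      = eVariationOn ψ (Set.Icc a b) := by
    have := eVariationOn.Icc_add_Icc ψ (s := Set.univ) hau hub (Set.mem_univ u)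
    simpa using this
  have hsplitψ2 : eVariationOn ψ (Set.Icc u w) + eVariationOn ψ (Set.Icc w b)
      = eVariationOn ψ (Set.Icc u b) := by
    have := eVariationOn.Icc_add_Icc ψ (s := Set.univ) huw hwb (Set.mem_univ w)
    simpa using this
  have hfin1 : eVariationOn φ (Set.Icc a u) ≠ ⊤ :=
    ne_top_of_le_ne_top hfin (eVariationOn.mono φ (Set.Icc_subset_Icc le_rfl hub))
  have hfin2 : eVariationOn φ (Set.Icc u w) ≠ ⊤ :=
    ne_top_of_le_ne_top hfin (eVariationOn.mono φ (Set.Icc_subset_Icc hau hwb))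
  have hfin3 : eVariationOn φ (Set.Icc w b) ≠ ⊤ :=
    ne_top_of_le_ne_top hfin (eVariationOn.mono φ (Set.Icc_subset_Icc haw le_rfl))
  have hψ2lt : eVariationOn ψ (Set.Icc u w) < eVariationOn φ (Set.Icc u w) := by
    have hψ2fin : eVariationOn ψ (Set.Icc u w) ≠ ⊤ :=
      ne_top_of_le_ne_top hfin2 (hlip _)
    calc eVariationOn ψ (Set.Icc u w)
        < eVariationOn ψ (Set.Icc u w) + ENNReal.ofReal δ :=
          ENNReal.lt_add_right hψ2fin (ENNReal.ofReal_pos.mpr hδ0).ne'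
      _ ≤ eVariationOn φ (Set.Icc u w) := key
  calc eVariationOn ψ (Set.Icc a b)
      = eVariationOn ψ (Set.Icc a u) + (eVariationOn ψ (Set.Icc u w)
        + eVariationOn ψ (Set.Icc w b)) := by rw [hsplitψ2, hsplitψ1]
    _ ≤ eVariationOn φ (Set.Icc a u) + (eVariationOn ψ (Set.Icc u w)
        + eVariationOn φ (Set.Icc w b)) :=
        add_le_add (hlip _) (add_le_add le_rfl (hlip _))
    _ < eVariationOn φ (Set.Icc a u) + (eVariationOn φ (Set.Icc u w)
        + eVariationOn φ (Set.Icc w b)) :=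
        ENNReal.add_lt_add_left hfin1 (ENNReal.add_lt_add_right hfin3 hψ2lt)
    _ = eVariationOn φ (Set.Icc a b) := by rw [hsplitφ2, hsplitφ1]


-- f is constant on segments between points with equal value
lemma f_const_on_segment {f : E2 →L[ℝ] ℝ} {B D : E2} {c : ℝ} (hfB : f B = c) (hfD : f D = c)
    {x : E2} (hx : x ∈ segment ℝ B D) : f x = c := by
  obtain ⟨p, q, hp, hq, hpq, rfl⟩ := hx
  simp only [map_add, map_smul, smul_eq_mul, hfB, hfD]
  linear_combination c * hpq

lemma aux_side
    (K : Set (EuclideanSpace ℝ (Fin 2)))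
    (a b : ℝ) (hab : a ≤ b)
    (φ : ℝ → EuclideanSpace ℝ (Fin 2)) (hφcont : ContinuousOn φ (Set.Icc a b))
    (hφfin : eVariationOn φ (Set.Icc a b) ≠ ⊤)
    (hcover : K ⊆ convexHull ℝ (φ '' Set.Icc a b))
    (hmin : ∀ (c d : ℝ), c ≤ d →
      ∀ ψ : ℝ → EuclideanSpace ℝ (Fin 2), ContinuousOn ψ (Set.Icc c d) →
        K ⊆ convexHull ℝ (ψ '' Set.Icc c d) →
        eVariationOn φ (Set.Icc a b) ≤ eVariationOn ψ (Set.Icc c d))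
    (α β : ℝ) (hα : α ∈ Set.Icc a b) (hβ : β ∈ Set.Icc a b)
    (hαext : φ α ∈ Set.extremePoints ℝ (convexHull ℝ (φ '' Set.Icc a b)))
    (hβext : φ β ∈ Set.extremePoints ℝ (convexHull ℝ (φ '' Set.Icc a b)))
    (hne : φ α ≠ φ β)
    (f : EuclideanSpace ℝ (Fin 2) →L[ℝ] ℝ) (hf : f ≠ 0) (c : ℝ)
    (hfα : f (φ α) = c) (hfβ : f (φ β) = c)
    (hInt : ∃ p ∈ segment ℝ (φ α) (φ β), p ∈ interior (convexHull ℝ (φ '' Set.Icc a b))) :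
    ∃ x ∈ K, f x ≤ c ∧ x ∉ segment ℝ (φ α) (φ β) := by
  by_contra hcon
  push_neg at hcon
  -- K lies in the upper half plane
  have hKH : K ⊆ {x | c ≤ f x} := by
    intro x hx
    by_contra hlt
    have hlt' : f x < c := not_le.mp hlt
    have hseg := hcon x hx hlt'.le
    have := f_const_on_segment hfα hfβ hseg
    exact absurd this (ne_of_lt hlt')
  -- a point of the hull strictly below the line
  set S : Set E2 := φ '' Set.Icc a b with hS
  obtain ⟨p, hpseg, hpint⟩ := hInt
  have hfp : f p = c := f_const_on_segment hfα hfβ hpseg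
  -- construct a point q in the hull with f q < c
  set v : E2 := (InnerProductSpace.toDual ℝ E2).symm f with hv
  have hfv : ∀ x : E2, ⟪v, x⟫ = f x := fun x => InnerProductSpace.toDual_symm_apply
  have hvne : v ≠ 0 := by
    intro h0
    apply hf
    ext x
    have := hfv x
    rw [h0] at this
    simpa using this.symm
  have hnv : (0:ℝ) < ‖v‖ := norm_pos_iff.mpr hvne
  obtain ⟨ε, hε0, hball⟩ := Metric.isOpen_iff.mp isOpen_interior p hpint
  set q : E2 := p - (ε / (2 * ‖v‖)) • v with hq
  have hqmem : q ∈ convexHull ℝ S := by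
    apply interior_subset
    apply hball
    rw [Metric.mem_ball, hq, dist_eq_norm]
    rw [show p - (ε / (2 * ‖v‖)) • v - p = -((ε / (2 * ‖v‖)) • v) by abel]
    rw [norm_neg, norm_smul, Real.norm_eq_abs, abs_of_pos (by positivity)]
    rw [div_mul_eq_mul_div, mul_comm]
    rw [div_lt_iff₀ (by positivity)]
    nlinarith
  have hfq : f q < c := by
    rw [hq, map_sub, map_smul, hfp, smul_eq_mul]
    have hfvv : f v = ‖v‖ ^ 2 := by
      rw [← hfv v, real_inner_self_eq_norm_sq]
    rw [hfvv]
    have : 0 < ε / (2 * ‖v‖) * ‖v‖ ^ 2 := by positivity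
    linarith
  -- hence a point of the curve strictly below the line
  obtain ⟨t₀, ht₀I, hft₀⟩ : ∃ t₀ ∈ Set.Icc a b, f (φ t₀) < c := by
    by_contra hno
    push_neg at hno
    have hSH : S ⊆ {x | c ≤ f x} := by
      rintro - ⟨t, htI, rfl⟩
      exact hno t htI
    have hhull : convexHull ℝ S ⊆ {x | c ≤ f x} := by
      apply convexHull_min hSH
      have : {x : E2 | c ≤ f x} = (f : E2 →ₗ[ℝ] ℝ) ⁻¹' (Ici c) := rfl
      rw [this]
      exact (convex_Ici c).linear_preimage _
    exact absurd (hhull hqmem) (not_le.mpr hfq)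
  -- the comparison curve
  set ψ : ℝ → E2 := clampMap v c ∘ φ with hψ
  have hψcont : ContinuousOn ψ (Set.Icc a b) :=
    (clamp_continuous v c).comp_continuousOn hφcont
  have hScomp : IsCompact S := isCompact_Icc.image_of_continuousOn hφcont
  have hψcover : K ⊆ convexHull ℝ (ψ '' Set.Icc a b) := by
    intro x hx
    have hxA : x ∈ (convexHull ℝ S) ∩ {x | c ≤ f x} := ⟨hcover hx, hKH hx⟩
    have h1 := hull_inter_halfplane_subset hScomp f hf c hαext hβext hne hfα hfβ hxA
    apply convexHull_mono ?_ h1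
    rintro - ⟨⟨t, htI, rfl⟩, hyc⟩
    refine ⟨t, htI, ?_⟩
    rw [hψ, Function.comp_apply, clamp_fix]
    rw [hfv]
    exact hyc
  have hle := hmin a b hab ψ hψcont hψcover
  have hlt := evar_clamp_lt hvne c φ hα ht₀I (by rw [hfv]; exact hfα) (by rw [hfv]; exact hft₀)
    hφfin
  exact absurd hle (not_le.mpr hlt)

/-- Proposition 5 of the paper: For a shortest curve `φ` whose convex
hull `K̃` covers `K`, and extreme points `φ(α) ≠ φ(β)` of `K̃`, either
`[φ(α), φ(β)] ⊆ bd(K̃)` or every line through `φ(α)` and `φ(β)` divides `K̃` into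
two parts, each containing a point of `K` outside the segment `[φ(α), φ(β)]`. -/
theorem segment_in_boundary_or_line_divides
    (K : Set (EuclideanSpace ℝ (Fin 2)))
    (hKcomp : IsCompact K) (hKconv : Convex ℝ K) (hKint : (interior K).Nonempty)
    (a b : ℝ) (hab : a ≤ b)
    (φ : ℝ → EuclideanSpace ℝ (Fin 2)) (hφcont : ContinuousOn φ (Set.Icc a b))
    (hφfin : eVariationOn φ (Set.Icc a b) ≠ ⊤)
    (hcover : K ⊆ convexHull ℝ (φ '' Set.Icc a b))
    (hmin : ∀ (c d : ℝ), c ≤ d →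
      ∀ ψ : ℝ → EuclideanSpace ℝ (Fin 2), ContinuousOn ψ (Set.Icc c d) →
        K ⊆ convexHull ℝ (ψ '' Set.Icc c d) →
        eVariationOn φ (Set.Icc a b) ≤ eVariationOn ψ (Set.Icc c d))
    (α β : ℝ) (hα : α ∈ Set.Icc a b) (hβ : β ∈ Set.Icc a b)
    (hαext : φ α ∈ Set.extremePoints ℝ (convexHull ℝ (φ '' Set.Icc a b)))
    (hβext : φ β ∈ Set.extremePoints ℝ (convexHull ℝ (φ '' Set.Icc a b)))
    (hne : φ α ≠ φ β) :
    segment ℝ (φ α) (φ β) ⊆ frontier (convexHull ℝ (φ '' Set.Icc a b)) ∨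
    (∀ (f : EuclideanSpace ℝ (Fin 2) →L[ℝ] ℝ), f ≠ 0 → ∀ c : ℝ,
      f (φ α) = c → f (φ β) = c →
      (∃ x₁ ∈ K, x₁ ∈ convexHull ℝ (φ '' Set.Icc a b) ∩ {x | f x ≤ c} ∧
        x₁ ∉ segment ℝ (φ α) (φ β)) ∧
      (∃ x₂ ∈ K, x₂ ∈ convexHull ℝ (φ '' Set.Icc a b) ∩ {x | c ≤ f x} ∧
        x₂ ∉ segment ℝ (φ α) (φ β))) := by
  by_cases hbd : segment ℝ (φ α) (φ β) ⊆ frontier (convexHull ℝ (φ '' Set.Icc a b))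
  · exact Or.inl hbd
  right
  have hInt : ∃ p ∈ segment ℝ (φ α) (φ β),
      p ∈ interior (convexHull ℝ (φ '' Set.Icc a b)) := by
    obtain ⟨p, hpseg, hpfr⟩ := not_subset.mp hbd
    refine ⟨p, hpseg, ?_⟩
    have hpK : p ∈ convexHull ℝ (φ '' Set.Icc a b) :=
      (convex_convexHull ℝ _).segment_subset hαext.1 hβext.1 hpseg
    have hpc : p ∈ closure (convexHull ℝ (φ '' Set.Icc a b)) := subset_closure hpK
    rw [frontier] at hpfr
    by_contra hnint
    exact hpfr ⟨hpc, hnint⟩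
  intro f hf c hfα hfβ
  constructor
  · obtain ⟨x, hxK, hxle, hxseg⟩ := aux_side K a b hab φ hφcont hφfin hcover hmin α β hα hβ
      hαext hβext hne f hf c hfα hfβ hInt
    exact ⟨x, hxK, ⟨hcover hxK, hxle⟩, hxseg⟩
  · obtain ⟨x, hxK, hxle, hxseg⟩ := aux_side K a b hab φ hφcont hφfin hcover hmin α β hα hβ
      hαext hβext hne (-f) (neg_ne_zero.mpr hf) (-c) (by simp [hfα]) (by simp [hfβ]) hInt
    refine ⟨x, hxK, ⟨hcover hxK, ?_⟩, hxseg⟩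
    simpa using hxle
end

section
/- Let K be a compact convex subset of the Euclidean plane ℝ² with nonempty interior, let A, B ∈ K with dist(A,B) = diam(K), and suppose γ ⊆ ℝ² satisfies γ ⊆ boundary(K) and boundary(K) = γ ∪ [A,B], where [A,B] is the closed segment between A and B. Let φ : [0,1] → ℝ² be a continuous map with φ(0) = A, φ(1) = B, φ injective, and φ([0,1]) = γ, and let per(K) be the length (total variation) on [0,1] of a continuous map β : ℝ → ℝ² with β(0) = β(1), β injective on [0,1) and image equal to the boundary of K. Then K is contained in the convex hull of γ and the length of φ on [0,1] equals per(K) − diam(K). -/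
open Set

variable {α : Type*} [LinearOrder α]

/-- Variation only depends on mutual distances of values on the set. -/
lemma evar_congr_edist {E F : Type*} [PseudoEMetricSpace E] [PseudoEMetricSpace F]
    {f : α → E} {g : α → F} {s : Set α}
    (h : ∀ x ∈ s, ∀ y ∈ s, edist (f x) (f y) = edist (g x) (g y)) :
    eVariationOn f s = eVariationOn g s := by
  dsimp only [eVariationOn]
  congr 1 with p : 1
  congr 1 with i : 1
  exact h _ (p.2.2.2 (i+1)) _ (p.2.2.2 i)

lemma evar_Icc_split {E : Type*} [PseudoEMetricSpace E] (f : α → E) {a b c : α}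
    (hab : a ≤ b) (hbc : b ≤ c) :
    eVariationOn f (Icc a b) + eVariationOn f (Icc b c) = eVariationOn f (Icc a c) := by
  have := eVariationOn.Icc_add_Icc f (s := Icc a c) hab hbc ⟨hab, hbc⟩
  rwa [Set.inter_eq_self_of_subset_right (Icc_subset_Icc le_rfl hbc),
    Set.inter_eq_self_of_subset_right (Icc_subset_Icc hab le_rfl),
    Set.inter_self] at this

lemma evar_monotoneOn_Icc {f : ℝ → ℝ} {a b : ℝ} (hab : a ≤ b) (hf : MonotoneOn f (Icc a b)) :
    eVariationOn f (Icc a b) = ENNReal.ofReal (f b - f a) := by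
  refine le_antisymm ?_ ?_
  · have := hf.eVariationOn_le (left_mem_Icc.2 hab) (right_mem_Icc.2 hab)
    rwa [Set.inter_self] at this
  · have := eVariationOn.edist_le f (left_mem_Icc.2 hab) (right_mem_Icc.2 hab)
    rwa [edist_dist, Real.dist_eq, abs_sub_comm, abs_of_nonneg
      (sub_nonneg.2 (hf (left_mem_Icc.2 hab) (right_mem_Icc.2 hab) hab))] at this

open Set

lemma evar_repar {E : Type*} [MetricSpace E] (f g : ℝ → E) {a b c d : ℝ}
    (hab : a ≤ b) (hcd : c ≤ d)
    (hfc : ContinuousOn f (Icc a b)) (hgc : ContinuousOn g (Icc c d))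
    (hfi : InjOn f (Icc a b)) (hgi : InjOn g (Icc c d))
    (him : f '' Icc a b = g '' Icc c d) :
    eVariationOn f (Icc a b) = eVariationOn g (Icc c d) := by
  haveI : CompactSpace (Icc c d) := isCompact_iff_compactSpace.mp isCompact_Icc
  have hmemG : ∀ t : Icc c d, g (t : ℝ) ∈ f '' Icc a b := by
    intro t; rw [him]; exact mem_image_of_mem _ t.2
  let G : Icc c d → (f '' Icc a b) := fun t => ⟨g t, hmemG t⟩
  have hGbij : Function.Bijective G := by
    constructor
    · intro s t hst
      have : g s = g t := congrArg Subtype.val hst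
      exact Subtype.ext (hgi s.2 t.2 this)
    · rintro ⟨y, hy⟩
      rw [him] at hy
      obtain ⟨t, ht, rfl⟩ := hy
      exact ⟨⟨t, ht⟩, rfl⟩
  have hGcont : Continuous G := Continuous.subtype_mk hgc.restrict _
  let e : Icc c d ≃ (f '' Icc a b) := Equiv.ofBijective G hGbij
  have hecont : Continuous e := hGcont
  let homeo : Icc c d ≃ₜ (f '' Icc a b) := Continuous.homeoOfEquivCompactToT2 (f := e) hecont
  let F : Icc a b → (f '' Icc a b) := fun t => ⟨f t, mem_image_of_mem _ t.2⟩
  have hFcont : Continuous F := Continuous.subtype_mk hfc.restrict _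
  let H : Icc a b → Icc c d := fun t => homeo.symm (F t)
  have hHcont : Continuous H := homeo.symm.continuous.comp hFcont
  let ψ : ℝ → ℝ := fun t => if h : t ∈ Icc a b then (H ⟨t, h⟩ : ℝ) else c
  have hkey : ∀ t (h : t ∈ Icc a b), g (ψ t) = f t := by
    intro t h
    have h1 : ψ t = (H ⟨t, h⟩ : ℝ) := dif_pos h
    have h2 : G (H ⟨t, h⟩) = F ⟨t, h⟩ := homeo.apply_symm_apply (F ⟨t, h⟩)
    have := congrArg Subtype.val h2
    rw [h1]; exact this
  have hψcont : ContinuousOn ψ (Icc a b) := by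
    rw [continuousOn_iff_continuous_restrict]
    have : domRestrict (Icc a b) ψ = fun x => (H x : ℝ) := by
      funext x; simp only [Set.domRestrict_apply, ψ, dif_pos x.2]
    rw [this]
    exact continuous_subtype_val.comp hHcont
  have hψinj : InjOn ψ (Icc a b) := by
    intro s hs t ht hst
    have : (H ⟨s, hs⟩ : ℝ) = (H ⟨t, ht⟩ : ℝ) := by
      simp only [ψ, dif_pos hs, dif_pos ht] at hst; exact hst
    have h2 : H ⟨s, hs⟩ = H ⟨t, ht⟩ := Subtype.ext this
    have h3 : F ⟨s, hs⟩ = F ⟨t, ht⟩ := homeo.symm.injective h2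
    have h4 : f s = f t := congrArg Subtype.val h3
    exact hfi hs ht h4
  have hψmaps : MapsTo ψ (Icc a b) (Icc c d) := by
    intro t ht; rw [show ψ t = (H ⟨t, ht⟩ : ℝ) from dif_pos ht]; exact (H ⟨t, ht⟩).2
  have hψsurj : SurjOn ψ (Icc a b) (Icc c d) := by
    intro y hy
    have hFsurj : ∀ z : (f '' Icc a b), ∃ x : Icc a b, F x = z := by
      rintro ⟨z, hz⟩
      obtain ⟨t, ht, rfl⟩ := hz
      exact ⟨⟨t, ht⟩, rfl⟩
    obtain ⟨x, hx⟩ := hFsurj (homeo ⟨y, hy⟩)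
    refine ⟨(x : ℝ), x.2, ?_⟩
    have hHx : H x = ⟨y, hy⟩ := by
      show homeo.symm (F x) = _
      rw [hx, Homeomorph.symm_apply_apply]
    have : ψ (x : ℝ) = ((H ⟨(x : ℝ), x.2⟩ : Icc c d) : ℝ) := dif_pos x.2
    rw [this, Subtype.coe_eta, hHx]
  have him2 : ψ '' Icc a b = Icc c d :=
    Subset.antisymm (image_subset_iff.2 hψmaps) hψsurj
  have heqon : EqOn f (g ∘ ψ) (Icc a b) := fun t ht => (hkey t ht).symm
  rw [eVariationOn.eq_of_eqOn heqon]
  rcases ContinuousOn.strictMonoOn_of_injOn_Icc' hab hψcont hψinj with hm | hm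
  · rw [eVariationOn.comp_eq_of_monotoneOn g ψ hm.monotoneOn, him2]
  · rw [eVariationOn.comp_eq_of_antitoneOn g ψ hm.antitoneOn, him2]

open Set

variable {E : Type*} [NormedAddCommGroup E] [InnerProductSpace ℝ E]

/-- On a segment, the normalized inner product with the direction is an "isometry" onto [0,‖B-A‖]. -/
lemma seg_param {A B : E} (hAB : A ≠ B) {x : E} (hx : x ∈ segment ℝ A B) :
    ∃ s ∈ Icc (0:ℝ) 1, x = A + s • (B - A) := by
  rw [segment_eq_image'] at hx
  obtain ⟨s, hs, rfl⟩ := hx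
  exact ⟨s, hs, rfl⟩

lemma evar_segment (f : ℝ → E) {p q : ℝ} (hpq : p ≤ q) {A B : E} (hAB : A ≠ B)
    (hc : ContinuousOn f (Icc p q)) (hi : InjOn f (Icc p q))
    (him : f '' Icc p q = segment ℝ A B) :
    eVariationOn f (Icc p q) = ENNReal.ofReal (dist A B) := by
  set v := B - A with hv
  have hvne : v ≠ 0 := sub_ne_zero.2 (Ne.symm hAB)
  have hvnorm : 0 < ‖v‖ := norm_pos_iff.2 hvne
  set h : E → ℝ := fun x => ‖v‖⁻¹ * inner ℝ (x - A) v with hh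
  -- value of h on segment points
  have hval : ∀ s : ℝ, h (A + s • v) = s * ‖v‖ := by
    intro s
    simp only [hh, add_sub_cancel_left, real_inner_smul_left, real_inner_self_eq_norm_sq]
    push_cast
    field_simp
  have hdistv : ∀ s t : ℝ, dist (A + s • v) (A + t • v) = |s - t| * ‖v‖ := by
    intro s t
    rw [dist_eq_norm]
    have : A + s • v - (A + t • v) = (s - t) • v := by rw [sub_smul]; abel
    rw [this, norm_smul, Real.norm_eq_abs]
  have hmemseg : ∀ x ∈ Icc p q, f x ∈ segment ℝ A B := by
    intro x hx; rw [← him]; exact mem_image_of_mem _ hx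
  -- h preserves distances on the segment
  have hpres : ∀ x ∈ segment ℝ A B, ∀ y ∈ segment ℝ A B, dist (h x) (h y) = dist x y := by
    intro x hx y hy
    obtain ⟨s, _, rfl⟩ := seg_param hAB hx
    obtain ⟨t, _, rfl⟩ := seg_param hAB hy
    rw [hval, hval, hdistv, Real.dist_eq, ← sub_mul, abs_mul, abs_of_nonneg hvnorm.le]
  set m : ℝ → ℝ := h ∘ f with hm
  have hcongr : eVariationOn f (Icc p q) = eVariationOn m (Icc p q) := by
    apply evar_congr_edist
    intro x hx y hy
    rw [edist_dist, edist_dist]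
    have : dist (m x) (m y) = dist (f x) (f y) := hpres _ (hmemseg x hx) _ (hmemseg y hy)
    rw [this]
  -- m is continuous and injective on [p,q]
  have hhcont : Continuous h := by
    apply Continuous.mul continuous_const
    exact (continuous_id.sub continuous_const).inner continuous_const
  have hmc : ContinuousOn m (Icc p q) := hhcont.comp_continuousOn hc
  have hmi : InjOn m (Icc p q) := by
    intro x hx y hy hxy
    apply hi hx hy
    obtain ⟨s, _, hs⟩ := seg_param hAB (hmemseg x hx)
    obtain ⟨t, _, ht⟩ := seg_param hAB (hmemseg y hy)
    have : s * ‖v‖ = t * ‖v‖ := by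
      rw [← hval, ← hval, ← hs, ← ht]; exact hxy
    have hst : s = t := mul_right_cancel₀ hvnorm.ne' this
    rw [hs, ht, hst]
  -- endpoints of m
  have hmlow : ∀ x ∈ Icc p q, 0 ≤ m x ∧ m x ≤ ‖v‖ := by
    intro x hx
    obtain ⟨s, hs, hsx⟩ := seg_param hAB (hmemseg x hx)
    have : m x = s * ‖v‖ := by rw [hm]; simp only [Function.comp_apply, hsx, ← hv, hval]
    constructor
    · rw [this]; exact mul_nonneg hs.1 hvnorm.le
    · rw [this]
      nlinarith [hs.2, hs.1, hvnorm.le]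
  have hA' : ∃ x ∈ Icc p q, m x = 0 := by
    have : A ∈ f '' Icc p q := him ▸ left_mem_segment ℝ A B
    obtain ⟨x, hx, hfx⟩ := this
    refine ⟨x, hx, ?_⟩
    have : m x = h A := by rw [hm]; simp [Function.comp_apply, hfx]
    rw [this]
    have := hval 0
    simpa using this
  have hB' : ∃ x ∈ Icc p q, m x = ‖v‖ := by
    have : B ∈ f '' Icc p q := him ▸ right_mem_segment ℝ A B
    obtain ⟨x, hx, hfx⟩ := this
    refine ⟨x, hx, ?_⟩
    have hB : B = A + (1:ℝ) • v := by rw [hv]; simp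
    have : m x = h B := by rw [hm]; simp [Function.comp_apply, hfx]
    rw [this, hB, hval, one_mul]
  have hdAB : dist A B = ‖v‖ := by rw [dist_eq_norm, hv, norm_sub_rev]
  rw [hcongr, hdAB]
  rcases ContinuousOn.strictMonoOn_of_injOn_Icc' hpq hmc hmi with hmono | hanti
  · -- m p = 0, m q = ‖v‖
    have hmp : m p = 0 := by
      obtain ⟨x, hx, hmx⟩ := hA'
      have h1 := (hmlow p (left_mem_Icc.2 hpq)).1
      have h2 : m p ≤ m x := hmono.monotoneOn (left_mem_Icc.2 hpq) hx hx.1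
      linarith [hmx ▸ h2]
    have hmq : m q = ‖v‖ := by
      obtain ⟨x, hx, hmx⟩ := hB'
      have h1 := (hmlow q (right_mem_Icc.2 hpq)).2
      have h2 : m x ≤ m q := hmono.monotoneOn hx (right_mem_Icc.2 hpq) hx.2
      linarith [hmx ▸ h2]
    rw [evar_monotoneOn_Icc hpq hmono.monotoneOn, hmp, hmq, sub_zero]
  · -- antitone: m p = ‖v‖, m q = 0
    have hmp : m p = ‖v‖ := by
      obtain ⟨x, hx, hmx⟩ := hB'
      have h1 := (hmlow p (left_mem_Icc.2 hpq)).2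
      have h2 : m x ≤ m p := hanti.antitoneOn (left_mem_Icc.2 hpq) hx hx.1
      linarith [hmx ▸ h2]
    have hmq : m q = 0 := by
      obtain ⟨x, hx, hmx⟩ := hA'
      have h1 := (hmlow q (right_mem_Icc.2 hpq)).1
      have h2 : m q ≤ m x := hanti.antitoneOn hx (right_mem_Icc.2 hpq) hx.2
      linarith [hmx ▸ h2]
    have hneg : eVariationOn m (Icc p q) = eVariationOn (fun t => -(m t)) (Icc p q) := by
      apply evar_congr_edist
      intro x _ y _
      rw [edist_dist, edist_dist, Real.dist_eq, Real.dist_eq]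
      rw [show -m x - -m y = -(m x - m y) by ring, abs_neg]
    have hmono2 : MonotoneOn (fun t => -(m t)) (Icc p q) := fun x hx y hy hxy =>
      neg_le_neg (hanti.antitoneOn hx hy hxy)
    rw [hneg, evar_monotoneOn_Icc hpq hmono2, hmq, hmp]
    simp

open Set

lemma preconn_subset_closed {X : Type*} [TopologicalSpace X] {s C1 C2 : Set X}
    (hs : IsPreconnected s) (h1 : IsClosed C1) (h2 : IsClosed C2)
    (hsub : s ⊆ C1 ∪ C2) (hdisj : s ∩ (C1 ∩ C2) = ∅) : s ⊆ C1 ∨ s ⊆ C2 := by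
  by_contra hcon
  push_neg at hcon
  obtain ⟨hn1, hn2⟩ := hcon
  obtain ⟨x1, hx1s, hx1⟩ := not_subset.1 hn1
  obtain ⟨x2, hx2s, hx2⟩ := not_subset.1 hn2
  have hsuv : s ⊆ C2ᶜ ∪ C1ᶜ := by
    intro x hx
    by_contra hx'
    simp only [mem_union, mem_compl_iff, not_or, not_not] at hx'
    have : x ∈ s ∩ (C1 ∩ C2) := ⟨hx, ⟨by tauto, by tauto⟩⟩
    rw [hdisj] at this; exact this
  obtain ⟨x, hxs, hx⟩ := hs C2ᶜ C1ᶜ h2.isOpen_compl h1.isOpen_compl hsuv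
    ⟨x2, hx2s, hx2⟩ ⟨x1, hx1s, hx1⟩
  rcases hsub hxs with h | h
  · exact hx.2 h
  · exact hx.1 h

lemma arc_dichotomy {X : Type*} [TopologicalSpace X] {γ seg S1 S2 : Set X} {A B : X}
    (hcl1 : IsClosed S1) (hcl2 : IsClosed S2)
    (huu : S1 ∪ S2 = γ ∪ seg)
    (hint : S1 ∩ S2 = {A, B})
    (hγc : IsPreconnected (γ \ {A, B})) (hsc : IsPreconnected (seg \ {A, B}))
    (hS1ne : (S1 \ {A, B}).Nonempty) (hS2ne : (S2 \ {A, B}).Nonempty)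
    (hAγ : A ∈ γ) (hBγ : B ∈ γ) (hAseg : A ∈ seg) (hBseg : B ∈ seg)
    (hAS1 : A ∈ S1) (hBS1 : B ∈ S1) (hAS2 : A ∈ S2) (hBS2 : B ∈ S2) :
    (S1 = γ ∧ S2 = seg) ∨ (S1 = seg ∧ S2 = γ) := by
  have hγsub : γ \ {A, B} ⊆ S1 ∪ S2 := fun x hx => huu ▸ Or.inl hx.1
  have hssub : seg \ {A, B} ⊆ S1 ∪ S2 := fun x hx => huu ▸ Or.inr hx.1
  have hγdisj : (γ \ {A, B}) ∩ (S1 ∩ S2) = ∅ := by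
    rw [hint]; ext x; simp only [mem_inter_iff, mem_diff, mem_empty_iff_false, iff_false]
    rintro ⟨⟨_, h⟩, h'⟩; exact h h'
  have hsdisj : (seg \ {A, B}) ∩ (S1 ∩ S2) = ∅ := by
    rw [hint]; ext x; simp only [mem_inter_iff, mem_diff, mem_empty_iff_false, iff_false]
    rintro ⟨⟨_, h⟩, h'⟩; exact h h'
  -- generic step: if γ' ⊆ Si and seg' ⊆ Sj with i ≠ j then Si = γ and Sj = seg.
  have step : ∀ T1 T2 : Set X, IsClosed T1 → IsClosed T2 → T1 ∪ T2 = γ ∪ seg →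
      T1 ∩ T2 = {A, B} → A ∈ T1 → B ∈ T1 → A ∈ T2 → B ∈ T2 →
      γ \ {A, B} ⊆ T1 → seg \ {A, B} ⊆ T2 → T1 = γ ∧ T2 = seg := by
    intro T1 T2 _ _ huu' hint' hAT1 hBT1 hAT2 hBT2 hγ1 hs2
    constructor
    · apply Subset.antisymm
      · intro x hx
        by_cases hxAB : x ∈ ({A, B} : Set X)
        · rcases hxAB with rfl | rfl
          · exact hAγ
          · exact hBγ
        · have hx' : x ∈ γ ∪ seg := huu' ▸ Or.inl hx
          rcases hx' with h | h
          · exact h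
          · have : x ∈ T2 := hs2 ⟨h, hxAB⟩
            have : x ∈ T1 ∩ T2 := ⟨hx, this⟩
            rw [hint'] at this
            exact absurd this hxAB
      · intro x hx
        by_cases hxAB : x ∈ ({A, B} : Set X)
        · rcases hxAB with rfl | rfl
          · exact hAT1
          · exact hBT1
        · exact hγ1 ⟨hx, hxAB⟩
    · apply Subset.antisymm
      · intro x hx
        by_cases hxAB : x ∈ ({A, B} : Set X)
        · rcases hxAB with rfl | rfl
          · exact hAseg
          · exact hBseg
        · have hx' : x ∈ γ ∪ seg := huu' ▸ Or.inr hx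
          rcases hx' with h | h
          · have : x ∈ T1 := hγ1 ⟨h, hxAB⟩
            have : x ∈ T1 ∩ T2 := ⟨this, hx⟩
            rw [hint'] at this
            exact absurd this hxAB
          · exact h
      · intro x hx
        by_cases hxAB : x ∈ ({A, B} : Set X)
        · rcases hxAB with rfl | rfl
          · exact hAT2
          · exact hBT2
        · exact hs2 ⟨hx, hxAB⟩
  rcases preconn_subset_closed hγc hcl1 hcl2 hγsub hγdisj with hγ1 | hγ2 <;>
    rcases preconn_subset_closed hsc hcl1 hcl2 hssub hsdisj with hs1 | hs2
  · -- both in S1: S2 \ {A,B} empty, contradiction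
    exfalso
    obtain ⟨x, hxS2, hxAB⟩ := hS2ne
    have hx' : x ∈ γ ∪ seg := huu ▸ Or.inr hxS2
    have hxS1 : x ∈ S1 := by
      rcases hx' with h | h
      · exact hγ1 ⟨h, hxAB⟩
      · exact hs1 ⟨h, hxAB⟩
    have : x ∈ S1 ∩ S2 := ⟨hxS1, hxS2⟩
    rw [hint] at this
    exact hxAB this
  · exact Or.inl (step S1 S2 hcl1 hcl2 huu hint hAS1 hBS1 hAS2 hBS2 hγ1 hs2)
  · refine Or.inr ?_
    have := step S2 S1 hcl2 hcl1 (by rw [union_comm]; exact huu)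
      (by rw [inter_comm]; exact hint) hAS2 hBS2 hAS1 hBS1 hγ2 hs1
    exact ⟨this.2, this.1⟩
  · exfalso
    obtain ⟨x, hxS1, hxAB⟩ := hS1ne
    have hx' : x ∈ γ ∪ seg := huu ▸ Or.inl hxS1
    have hxS2 : x ∈ S2 := by
      rcases hx' with h | h
      · exact hγ2 ⟨h, hxAB⟩
      · exact hs2 ⟨h, hxAB⟩
    have : x ∈ S1 ∩ S2 := ⟨hxS1, hxS2⟩
    rw [hint] at this
    exact hxAB this

open Set

local notation "E2" => EuclideanSpace ℝ (Fin 2)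

lemma subset_convexHull_frontier {K : Set E2} (hK : IsCompact K) :
    K ⊆ convexHull ℝ (frontier K) := by
  intro x hx
  set v : E2 := EuclideanSpace.single (0 : Fin 2) (1 : ℝ) with hv
  have hvnorm : ‖v‖ = 1 := by simp [hv, EuclideanSpace.norm_single]
  set T : Set ℝ := {t | x + t • v ∈ K} with hT
  have hcont : Continuous (fun t : ℝ => x + t • v) :=
    continuous_const.add (continuous_id.smul continuous_const)
  have hTclosed : IsClosed T := hK.isClosed.preimage hcont
  have hT0 : (0 : ℝ) ∈ T := by simp [hT, hx]
  obtain ⟨R, hR⟩ := hK.isBounded.subset_closedBall x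
  have hTbdd : ∀ t ∈ T, |t| ≤ R := by
    intro t ht
    have := hR ht
    rw [Metric.mem_closedBall, dist_eq_norm] at this
    simpa [norm_smul, hvnorm] using this
  have hbddA : BddAbove T := ⟨R, fun t ht => le_trans (le_abs_self t) (hTbdd t ht)⟩
  have hbddB : BddBelow T := ⟨-R, fun t ht => neg_le_of_abs_le (hTbdd t ht)⟩
  have hTne : T.Nonempty := ⟨0, hT0⟩
  set tp := sSup T with htp
  set tm := sInf T with htm
  have htpT : tp ∈ T := hTclosed.csSup_mem hTne hbddA
  have htmT : tm ∈ T := hTclosed.csInf_mem hTne hbddB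
  have hle : tm ≤ 0 := csInf_le hbddB hT0
  have hge : 0 ≤ tp := le_csSup hbddA hT0
  -- frontier membership
  have hfr : ∀ t ∈ T, (∀ s ∈ T, s ≤ t) → x + t • v ∈ frontier K := by
    intro t ht hmax
    rw [hK.isClosed.frontier_eq]
    refine ⟨ht, fun hint => ?_⟩
    obtain ⟨ε, hε, hball⟩ := Metric.isOpen_iff.1 isOpen_interior _ hint
    have : x + (t + ε / 2) • v ∈ K := by
      apply interior_subset
      apply hball
      rw [Metric.mem_ball, dist_eq_norm]
      have : x + (t + ε / 2) • v - (x + t • v) = (ε / 2) • v := by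
        rw [add_smul]; abel
      rw [this]
      rw [norm_smul, hvnorm, mul_one, Real.norm_eq_abs, abs_of_pos (half_pos hε)]
      linarith
    have := hmax _ this
    linarith
  have hfr' : ∀ t ∈ T, (∀ s ∈ T, t ≤ s) → x + t • v ∈ frontier K := by
    intro t ht hmin
    rw [hK.isClosed.frontier_eq]
    refine ⟨ht, fun hint => ?_⟩
    obtain ⟨ε, hε, hball⟩ := Metric.isOpen_iff.1 isOpen_interior _ hint
    have : x + (t - ε / 2) • v ∈ K := by
      apply interior_subset
      apply hball
      rw [Metric.mem_ball, dist_eq_norm]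
      have : x + (t - ε / 2) • v - (x + t • v) = (-(ε / 2)) • v := by
        rw [sub_smul, neg_smul]; abel
      rw [this]
      rw [norm_smul, hvnorm, mul_one, Real.norm_eq_abs, abs_neg, abs_of_pos (half_pos hε)]
      linarith
    have := hmin _ this
    linarith
  have hyp : x + tp • v ∈ frontier K := hfr tp htpT (fun s hs => le_csSup hbddA hs)
  have hym : x + tm • v ∈ frontier K := hfr' tm htmT (fun s hs => csInf_le hbddB hs)
  by_cases hd : tp - tm = 0
  · have h0 : tp = 0 := by
      have : tm = tp := by linarith
      linarith [this ▸ hle]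
    have : x + tp • v = x := by rw [h0, zero_smul, add_zero]
    exact subset_convexHull ℝ _ (this ▸ hyp)
  · have hdpos : 0 < tp - tm := lt_of_le_of_ne (by linarith) (Ne.symm hd)
    set a : ℝ := tp / (tp - tm) with ha
    set b : ℝ := -tm / (tp - tm) with hb
    have ha0 : 0 ≤ a := div_nonneg hge hdpos.le
    have hb0 : 0 ≤ b := div_nonneg (by linarith) hdpos.le
    have hab : a + b = 1 := by
      rw [ha, hb, ← add_div, show tp + -tm = tp - tm by ring]
      exact div_self hd
    have hcomb : a • (x + tm • v) + b • (x + tp • v) = x := by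
      have h1 : a • (x + tm • v) + b • (x + tp • v)
          = (a + b) • x + (a * tm + b * tp) • v := by
        rw [add_smul, add_smul, smul_add, smul_add, smul_smul, smul_smul]
        abel
      rw [h1, hab, one_smul]
      have : a * tm + b * tp = 0 := by
        rw [ha, hb, div_mul_eq_mul_div, div_mul_eq_mul_div, ← add_div,
          show tp * tm + -tm * tp = 0 by ring, zero_div]
      rw [this, zero_smul, add_zero]
    rw [← hcomb]
    exact (convex_convexHull ℝ _) (subset_convexHull ℝ _ hym)
      (subset_convexHull ℝ _ hyp) ha0 hb0 hab

/-- Example 1 of the paper / equality case attained: If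
`bd(K) = γ ∪ [A,B]` with `A, B ∈ K`, `dist(A,B) = diam(K)`, and `φ` is an
injective parametrization of `γ` from `A` to `B`, then `K ⊆ conv(γ)` and
`length(φ) = per(K) − diam(K)`. -/
theorem convex_arc_attains_equality
    (K : Set (EuclideanSpace ℝ (Fin 2)))
    (hKcomp : IsCompact K) (hKconv : Convex ℝ K) (hKint : (interior K).Nonempty)
    (A B : EuclideanSpace ℝ (Fin 2)) (hA : A ∈ K) (hB : B ∈ K)
    (hdiam : dist A B = Metric.diam K)
    (γ : Set (EuclideanSpace ℝ (Fin 2)))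
    (hγsub : γ ⊆ frontier K)
    (hfront : frontier K = γ ∪ segment ℝ A B)
    (φ : ℝ → EuclideanSpace ℝ (Fin 2)) (hφcont : ContinuousOn φ (Set.Icc (0:ℝ) 1))
    (hφ0 : φ 0 = A) (hφ1 : φ 1 = B)
    (hφinj : Set.InjOn φ (Set.Icc (0:ℝ) 1))
    (hφim : φ '' Set.Icc (0:ℝ) 1 = γ)
    (β : ℝ → EuclideanSpace ℝ (Fin 2)) (hβcont : Continuous β)
    (hβcycle : β 0 = β 1) (hβinj : Set.InjOn β (Set.Ico (0:ℝ) 1))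
    (hβim : β '' Set.Icc (0:ℝ) 1 = frontier K) :
    K ⊆ convexHull ℝ γ ∧
    eVariationOn φ (Set.Icc (0:ℝ) 1) =
      eVariationOn β (Set.Icc (0:ℝ) 1) - ENNReal.ofReal (Metric.diam K) := by
  classical
  have hAγ : A ∈ γ := by rw [← hφim]; exact ⟨0, ⟨le_rfl, zero_le_one⟩, hφ0⟩
  have hBγ : B ∈ γ := by rw [← hφim]; exact ⟨1, ⟨zero_le_one, le_rfl⟩, hφ1⟩
  -- Part 1
  have part1 : K ⊆ convexHull ℝ γ := by
    intro x hx
    have h2 : frontier K ⊆ convexHull ℝ γ := by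
      rw [hfront]
      exact union_subset (subset_convexHull ℝ γ)
        ((convex_convexHull ℝ γ).segment_subset (subset_convexHull ℝ γ hAγ)
          (subset_convexHull ℝ γ hBγ))
    exact convexHull_min h2 (convex_convexHull ℝ γ) (subset_convexHull_frontier hKcomp hx)
  refine ⟨part1, ?_⟩
  -- diam K > 0 and A ≠ B
  have hdiampos : 0 < Metric.diam K := by
    obtain ⟨x₀, hx₀⟩ := hKint
    obtain ⟨ε, hε, hball⟩ := Metric.isOpen_iff.1 isOpen_interior _ hx₀
    set v : EuclideanSpace ℝ (Fin 2) := EuclideanSpace.single (0 : Fin 2) (1 : ℝ) with hv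
    have hvnorm : ‖v‖ = 1 := by simp [hv, EuclideanSpace.norm_single]
    have hdxy : dist (x₀ + (ε/2) • v) x₀ = ε / 2 := by
      rw [dist_eq_norm, add_sub_cancel_left, norm_smul, hvnorm, mul_one, Real.norm_eq_abs,
        abs_of_pos (half_pos hε)]
    have hyK : x₀ + (ε/2) • v ∈ K := by
      apply interior_subset
      apply hball
      rw [Metric.mem_ball, hdxy]
      linarith
    calc (0:ℝ) < ε / 2 := half_pos hε
    _ = dist (x₀ + (ε/2) • v) x₀ := hdxy.symm
    _ ≤ Metric.diam K := Metric.dist_le_diam_of_mem hKcomp.isBounded hyK (interior_subset hx₀)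
  have hdpos : 0 < dist A B := hdiam ▸ hdiampos
  have hAB : A ≠ B := by
    intro h; rw [h, dist_self] at hdpos; exact lt_irrefl _ hdpos
  -- parameter of A
  have hAfr : A ∈ frontier K := hγsub hAγ
  obtain ⟨s₀, hs₀, hs₀A⟩ : A ∈ β '' Icc (0:ℝ) 1 := by rw [hβim]; exact hAfr
  set a : ℝ := if s₀ = 1 then 0 else s₀ with ha
  have haIco : a ∈ Ico (0:ℝ) 1 := by
    by_cases h : s₀ = 1
    · simp [ha, h]
    · simp only [ha, if_neg h]
      exact ⟨hs₀.1, lt_of_le_of_ne hs₀.2 h⟩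
  have hβaA : β a = A := by
    by_cases h : s₀ = 1
    · simp only [ha, if_pos h]
      rw [hβcycle, ← h]; exact hs₀A
    · simp only [ha, if_neg h]; exact hs₀A
  -- the rotated loop
  set g : ℝ → EuclideanSpace ℝ (Fin 2) :=
    fun t => if t ≤ 1 - a then β (t + a) else β (t + a - 1) with hg
  have hgcont : Continuous g := by
    apply Continuous.if_le
    · exact hβcont.comp (continuous_id.add continuous_const)
    · exact hβcont.comp ((continuous_id.add continuous_const).sub continuous_const)
    · exact continuous_id
    · exact continuous_const
    · intro x hx
      rw [hx]
      have h1 : 1 - a + a = 1 := by ring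
      have h2 : 1 - a + a - 1 = 0 := by ring
      rw [h2, h1, hβcycle]
  have hg0 : g 0 = A := by
    have : (0:ℝ) ≤ 1 - a := by linarith [haIco.2]
    simp only [hg, if_pos this, zero_add, hβaA]
  have hg1 : g 1 = A := by
    by_cases h : (1:ℝ) ≤ 1 - a
    · have ha0 : a = 0 := le_antisymm (by linarith) haIco.1
      have e1 : g 1 = β (1 + a) := by simp only [hg, if_pos h]
      rw [ha0] at hβaA e1
      rw [e1, add_zero, ← hβcycle]
      exact hβaA
    · have e1 : g 1 = β (1 + a - 1) := by simp only [hg, if_neg h]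
      rw [e1, show (1:ℝ) + a - 1 = a by ring, hβaA]
  -- g written via a wrap map on [0,1)
  have hwrap : ∀ r ∈ Ico (0:ℝ) 1, (if r + a < 1 then r + a else r + a - 1) ∈ Ico (0:ℝ) 1 ∧
      g r = β (if r + a < 1 then r + a else r + a - 1) := by
    intro r hr
    by_cases h : r + a < 1
    · rw [if_pos h]
      refine ⟨⟨by linarith [hr.1, haIco.1], h⟩, ?_⟩
      simp only [hg]
      rw [if_pos (by linarith : r ≤ 1 - a)]
    · rw [if_neg h]
      refine ⟨⟨by linarith, by linarith [hr.2, haIco.2]⟩, ?_⟩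
      simp only [hg]
      by_cases h2 : r ≤ 1 - a
      · have hra : r + a = 1 := le_antisymm (by linarith) (by linarith)
        rw [if_pos h2, hra, show (1:ℝ) - 1 = 0 by ring, hβcycle]
      · rw [if_neg h2]
  have hginj : InjOn g (Ico (0:ℝ) 1) := by
    intro x hx y hy hxy
    obtain ⟨hwx, hgx⟩ := hwrap x hx
    obtain ⟨hwy, hgy⟩ := hwrap y hy
    rw [hgx, hgy] at hxy
    have heq := hβinj hwx hwy hxy
    by_cases h1 : x + a < 1 <;> by_cases h2 : y + a < 1
    · rw [if_pos h1, if_pos h2] at heq; linarith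
    · rw [if_pos h1, if_neg h2] at heq; linarith [hy.2, hx.1]
    · rw [if_neg h1, if_pos h2] at heq; linarith [hx.2, hy.1]
    · rw [if_neg h1, if_neg h2] at heq; linarith
  -- variation of g equals variation of β
  have hc1 : (0:ℝ) ≤ 1 - a := by linarith [haIco.2]
  have hc2 : (1:ℝ) - a ≤ 1 := by linarith [haIco.1]
  have he1 : EqOn g (β ∘ (· + a)) (Icc 0 (1 - a)) := by
    intro t ht
    simp only [hg, Function.comp_apply]
    rw [if_pos ht.2]
  have he2 : EqOn g (β ∘ (· + (a - 1))) (Icc (1 - a) 1) := by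
    intro t ht
    simp only [hg, Function.comp_apply]
    by_cases h : t ≤ 1 - a
    · have hta : t = 1 - a := le_antisymm h ht.1
      rw [if_pos h, hta, show 1 - a + a = 1 by ring, show 1 - a + (a - 1) = 0 by ring, hβcycle]
    · rw [if_neg h, show t + (a - 1) = t + a - 1 by ring]
  have hmono1 : MonotoneOn (· + a) (Icc (0:ℝ) (1 - a)) := fun x _ y _ h => by
    simpa using add_le_add_right h a
  have hmono2 : MonotoneOn (· + (a - 1)) (Icc ((1:ℝ) - a) 1) := fun x _ y _ h => by
    simpa using add_le_add_right h (a - 1)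
  have him1 : (· + a) '' Icc (0:ℝ) (1 - a) = Icc a 1 := by
    rw [image_add_const_Icc, zero_add, show 1 - a + a = 1 by ring]
  have him2 : (· + (a - 1)) '' Icc ((1:ℝ) - a) 1 = Icc 0 a := by
    rw [image_add_const_Icc, show 1 - a + (a - 1) = 0 by ring, show 1 + (a - 1) = a by ring]
  have hvar1 : eVariationOn g (Icc 0 (1 - a)) = eVariationOn β (Icc a 1) := by
    rw [eVariationOn.eq_of_eqOn he1, eVariationOn.comp_eq_of_monotoneOn β _ hmono1, him1]
  have hvar2 : eVariationOn g (Icc (1 - a) 1) = eVariationOn β (Icc 0 a) := by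
    rw [eVariationOn.eq_of_eqOn he2, eVariationOn.comp_eq_of_monotoneOn β _ hmono2, him2]
  have hgvar : eVariationOn g (Icc 0 1) = eVariationOn β (Icc 0 1) := by
    rw [← evar_Icc_split g hc1 hc2, hvar1, hvar2, add_comm,
      evar_Icc_split β haIco.1 haIco.2.le]
  have hgim : g '' Icc 0 1 = frontier K := by
    rw [← Icc_union_Icc_eq_Icc hc1 hc2, image_union, he1.image_eq, he2.image_eq,
      image_comp, image_comp, him1, him2, union_comm, ← image_union,
      Icc_union_Icc_eq_Icc haIco.1 haIco.2.le, hβim]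
  -- parameter of B
  have hBfr : B ∈ frontier K := hγsub hBγ
  obtain ⟨t₀, ht₀, ht₀B⟩ : B ∈ β '' Icc (0:ℝ) 1 := by rw [hβim]; exact hBfr
  set b0 : ℝ := if t₀ = 1 then 0 else t₀ with hb0
  have hb0Ico : b0 ∈ Ico (0:ℝ) 1 := by
    by_cases h : t₀ = 1
    · simp [hb0, h]
    · simp only [hb0, if_neg h]
      exact ⟨ht₀.1, lt_of_le_of_ne ht₀.2 h⟩
  have hβb0B : β b0 = B := by
    by_cases h : t₀ = 1
    · simp only [hb0, if_pos h]
      rw [hβcycle, ← h]; exact ht₀B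
    · simp only [hb0, if_neg h]; exact ht₀B
  have hab0 : a ≠ b0 := by
    intro h
    apply hAB
    rw [← hβaA, ← hβb0B, h]
  set b : ℝ := if a ≤ b0 then b0 - a else b0 - a + 1 with hbdef
  have hbprop : g b = B ∧ 0 < b ∧ b < 1 := by
    by_cases h : a ≤ b0
    · have hab0' : a < b0 := lt_of_le_of_ne h hab0
      rw [hbdef, if_pos h]
      refine ⟨?_, by linarith, by linarith [hb0Ico.2, haIco.1]⟩
      have hble : b0 - a ≤ 1 - a := by linarith [hb0Ico.2]
      simp only [hg]
      rw [if_pos hble, show b0 - a + a = b0 by ring, hβb0B]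
    · push_neg at h
      rw [hbdef, if_neg (not_le.2 h)]
      refine ⟨?_, by linarith [hb0Ico.1, haIco.2], by linarith⟩
      by_cases hb00 : b0 = 0
      · have : b0 - a + 1 ≤ 1 - a := by linarith [hb00.le]
        simp only [hg]
        rw [if_pos this, show b0 - a + 1 + a = b0 + 1 by ring, hb00, zero_add, ← hβcycle,
          ← hb00, hβb0B]
      · have hb0pos : 0 < b0 := lt_of_le_of_ne hb0Ico.1 (Ne.symm hb00)
        have : ¬ (b0 - a + 1 ≤ 1 - a) := by intro hcon; linarith
        simp only [hg]
        rw [if_neg this, show b0 - a + 1 + a - 1 = b0 by ring, hβb0B]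
  obtain ⟨hgb, hb0lt, hblt1⟩ := hbprop
  -- injectivity on the two arcs
  have hinj1 : InjOn g (Icc 0 b) :=
    hginj.mono (fun x hx => mem_Ico.2 ⟨(mem_Icc.1 hx).1, lt_of_le_of_lt (mem_Icc.1 hx).2 hblt1⟩)
  have hinj2 : InjOn g (Icc b 1) := by
    intro x hx y hy hxy
    by_cases hx1 : x = 1 <;> by_cases hy1 : y = 1
    · rw [hx1, hy1]
    · exfalso
      rw [hx1, hg1, ← hg0] at hxy
      have := hginj ⟨le_rfl, zero_lt_one⟩
        ⟨le_trans hb0lt.le hy.1, lt_of_le_of_ne hy.2 hy1⟩ hxy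
      have hyb := hy.1
      rw [← this] at hyb
      linarith
    · exfalso
      rw [hy1, hg1, ← hg0] at hxy
      have := hginj ⟨le_trans hb0lt.le hx.1, lt_of_le_of_ne hx.2 hx1⟩
        ⟨le_rfl, zero_lt_one⟩ hxy
      have hxb := hx.1
      rw [this] at hxb
      linarith
    · exact hginj ⟨le_trans hb0lt.le hx.1, lt_of_le_of_ne hx.2 hx1⟩
        ⟨le_trans hb0lt.le hy.1, lt_of_le_of_ne hy.2 hy1⟩ hxy
  -- the two arcs
  set S1 : Set (EuclideanSpace ℝ (Fin 2)) := g '' Icc 0 b with hS1def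
  set S2 : Set (EuclideanSpace ℝ (Fin 2)) := g '' Icc b 1 with hS2def
  have hS1cl : IsClosed S1 := (isCompact_Icc.image hgcont).isClosed
  have hS2cl : IsClosed S2 := (isCompact_Icc.image hgcont).isClosed
  have huu : S1 ∪ S2 = γ ∪ segment ℝ A B := by
    rw [hS1def, hS2def, ← image_union, Icc_union_Icc_eq_Icc hb0lt.le hblt1.le, hgim, hfront]
  have hAS1 : A ∈ S1 := ⟨0, ⟨le_rfl, hb0lt.le⟩, hg0⟩
  have hBS1 : B ∈ S1 := ⟨b, ⟨hb0lt.le, le_rfl⟩, hgb⟩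
  have hAS2 : A ∈ S2 := ⟨1, ⟨hblt1.le, le_rfl⟩, hg1⟩
  have hBS2 : B ∈ S2 := ⟨b, ⟨le_rfl, hblt1.le⟩, hgb⟩
  have hintS : S1 ∩ S2 = {A, B} := by
    apply Subset.antisymm
    · rintro x ⟨⟨s1, hs1, hxeq1⟩, ⟨t1, ht1, hxeq2⟩⟩
      by_cases ht11 : t1 = 1
      · left
        rw [← hxeq2, ht11, hg1]
      · have hs1' : s1 ∈ Ico (0:ℝ) 1 := ⟨hs1.1, lt_of_le_of_lt hs1.2 hblt1⟩
        have ht1' : t1 ∈ Ico (0:ℝ) 1 := ⟨le_trans hb0lt.le ht1.1, lt_of_le_of_ne ht1.2 ht11⟩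
        have hst : s1 = t1 := hginj hs1' ht1' (by rw [hxeq1, hxeq2])
        have hsb : s1 = b := le_antisymm hs1.2 (hst ▸ ht1.1)
        right
        rw [← hxeq1, hsb, hgb]
        rfl
    · rintro x (rfl | rfl)
      · exact ⟨hAS1, hAS2⟩
      · exact ⟨hBS1, hBS2⟩
  -- preconnectedness of the pieces
  have hγdiff : γ \ {A, B} = φ '' Ioo 0 1 := by
    apply Subset.antisymm
    · rintro x ⟨hxγ, hxAB⟩
      rw [← hφim] at hxγ
      obtain ⟨t, ht, rfl⟩ := hxγ
      refine ⟨t, ⟨lt_of_le_of_ne ht.1 ?_, lt_of_le_of_ne ht.2 ?_⟩, rfl⟩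
      · intro h
        exact hxAB (Or.inl (by rw [← h, hφ0]))
      · intro h
        exact hxAB (Or.inr (by rw [h, hφ1]; rfl))
    · rintro x ⟨t, ht, rfl⟩
      refine ⟨by rw [← hφim]; exact ⟨t, Ioo_subset_Icc_self ht, rfl⟩, ?_⟩
      rintro (h | h)
      · have : t = 0 := hφinj (Ioo_subset_Icc_self ht) ⟨le_rfl, zero_le_one⟩ (by rw [hφ0]; exact h)
        exact absurd this (ne_of_gt ht.1)
      · have : t = 1 := hφinj (Ioo_subset_Icc_self ht) ⟨zero_le_one, le_rfl⟩
          (by rw [hφ1]; exact h)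
        exact absurd this (ne_of_lt ht.2)
  have hγpre : IsPreconnected (γ \ {A, B}) := by
    rw [hγdiff]
    exact isPreconnected_Ioo.image φ (hφcont.mono Ioo_subset_Icc_self)
  have hsegdiff : segment ℝ A B \ {A, B} = openSegment ℝ A B := by
    apply Subset.antisymm
    · rintro x ⟨hxseg, hxAB⟩
      rw [← insert_endpoints_openSegment] at hxseg
      rcases hxseg with rfl | rfl | h
      · exact absurd (Or.inl rfl) hxAB
      · exact absurd (Or.inr rfl) hxAB
      · exact h
    · intro x hx
      refine ⟨openSegment_subset_segment ℝ A B hx, ?_⟩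
      rintro (rfl | rfl)
      · exact hAB (left_mem_openSegment_iff.1 hx)
      · exact hAB (right_mem_openSegment_iff.1 hx)
  have hsegpre : IsPreconnected (segment ℝ A B \ {A, B}) := by
    rw [hsegdiff]
    exact (convex_openSegment (𝕜 := ℝ) A B).isPreconnected
  -- nonemptiness
  have hmemhalf : b/2 ∈ Ico (0:ℝ) 1 := mem_Ico.2 ⟨by linarith, by linarith⟩
  have hmemhalf2 : (b+1)/2 ∈ Ico (0:ℝ) 1 := mem_Ico.2 ⟨by linarith, by linarith⟩
  have hmem0 : (0:ℝ) ∈ Ico (0:ℝ) 1 := mem_Ico.2 ⟨le_rfl, zero_lt_one⟩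
  have hmemb : b ∈ Ico (0:ℝ) 1 := mem_Ico.2 ⟨hb0lt.le, hblt1⟩
  have hS1ne : (S1 \ {A, B}).Nonempty := by
    refine ⟨g (b/2), ⟨b/2, mem_Icc.2 ⟨by linarith, by linarith⟩, rfl⟩, ?_⟩
    rintro (h | h)
    · have heq : g (b/2) = g 0 := by rw [hg0]; exact h
      have := hginj hmemhalf hmem0 heq
      linarith
    · have heq : g (b/2) = g b := by rw [hgb]; exact h
      have := hginj hmemhalf hmemb heq
      linarith
  have hS2ne : (S2 \ {A, B}).Nonempty := by
    refine ⟨g ((b+1)/2), ⟨(b+1)/2, mem_Icc.2 ⟨by linarith, by linarith⟩, rfl⟩, ?_⟩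
    rintro (h | h)
    · have heq : g ((b+1)/2) = g 0 := by rw [hg0]; exact h
      have := hginj hmemhalf2 hmem0 heq
      linarith
    · have heq : g ((b+1)/2) = g b := by rw [hgb]; exact h
      have := hginj hmemhalf2 hmemb heq
      linarith
  -- dichotomy
  rcases arc_dichotomy hS1cl hS2cl huu hintS hγpre hsegpre hS1ne hS2ne hAγ hBγ
      (left_mem_segment ℝ A B) (right_mem_segment ℝ A B) hAS1 hBS1 hAS2 hBS2 with
    ⟨h1, h2⟩ | ⟨h1, h2⟩
  · -- S1 = γ, S2 = segment
    have e1 : eVariationOn g (Icc 0 b) = eVariationOn φ (Icc 0 1) :=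
      evar_repar g φ hb0lt.le zero_le_one hgcont.continuousOn hφcont hinj1 hφinj
        (by rw [hφim]; exact h1)
    have e2 : eVariationOn g (Icc b 1) = ENNReal.ofReal (dist A B) :=
      evar_segment g hblt1.le hAB hgcont.continuousOn hinj2 h2
    have hsum : eVariationOn β (Icc 0 1) =
        eVariationOn φ (Icc 0 1) + ENNReal.ofReal (dist A B) := by
      rw [← hgvar, ← evar_Icc_split g hb0lt.le hblt1.le, e1, e2]
    rw [← hdiam, hsum, ENNReal.add_sub_cancel_right ENNReal.ofReal_ne_top]
  · -- S1 = segment, S2 = γ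
    have e1 : eVariationOn g (Icc 0 b) = ENNReal.ofReal (dist A B) :=
      evar_segment g hb0lt.le hAB hgcont.continuousOn hinj1 h1
    have e2 : eVariationOn g (Icc b 1) = eVariationOn φ (Icc 0 1) :=
      evar_repar g φ hblt1.le zero_le_one hgcont.continuousOn hφcont hinj2 hφinj
        (by rw [hφim]; exact h2)
    have hsum : eVariationOn β (Icc 0 1) =
        eVariationOn φ (Icc 0 1) + ENNReal.ofReal (dist A B) := by
      rw [← hgvar, ← evar_Icc_split g hb0lt.le hblt1.le, e1, e2, add_comm]
    rw [← hdiam, hsum, ENNReal.add_sub_cancel_right ENNReal.ofReal_ne_top]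
end
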